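/- arXiv:1107.2059 — 7 statements merged into one kernel-verified Lean document; each statement's English description precedes it below -/
import Mathlib

section
/- Let F_q be a finite field with q elements, c ∈ F_q a primitive element (a generator of the multiplicative group F_q^×), and let n, r be integers with 1 ≤ r < n ≤ q−1. Let a_1, …, a_n ∈ F_q^× and assume that the binomial coefficients C(r,j) are nonzero as elements of F_q for all 0 ≤ j ≤ r. Set G(z) = ( a_1^r (z+1)^r, a_2^r (z+c)^r, a_3^r (z+c^2)^r, …, a_n^r (z+c^{n−1})^r ) ∈ F_q[z]^n. Then G(z) is a canonical (basic and minimal) generator matrix of the one-dimensional convolutional code C = F_q(z)·G(z) ⊆ F_q(z)^n, C has degree r, and the free distance of C equals n(r+1); hence C is an MDS convolutional code with parameters (n, 1, r). -/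
open Polynomial Finset

/-- The vector of rational functions obtained from a vector of polynomials. -/
noncomputable def liftVec {F : Type*} [Field F] {n : ℕ} (x : Fin n → Polynomial F) :
    Fin n → RatFunc F :=
  fun i => algebraMap (Polynomial F) (RatFunc F) (x i)

/-- The weight of a polynomial vector `x(z) = Σ_t x_t z^t` is `Σ_t w_H(x_t)`. -/
noncomputable def polyWeight {F : Type*} [Field F] [DecidableEq F] {n : ℕ}
    (x : Fin n → Polynomial F) : ℕ :=
  ∑ t ∈ Finset.range ((Finset.univ.sup fun i => (x i).natDegree) + 1),
    hammingNorm (fun i => (x i).coeff t)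

namespace CGCaux

def WW (r : ℕ) (S : Finset ℕ) (t : ℕ) : Finset ℕ := S.filter (fun s => s ≤ t ∧ t ≤ s + r)

def spanW (r : ℕ) (S : Finset ℕ) (t : ℕ) : ℕ :=
  (WW r S t).sup (fun s => (WW r S t).sup id - s)

lemma sup_id_mem (S : Finset ℕ) (hS : S.Nonempty) : S.sup id ∈ S := by
  have := S.max'_mem hS
  rwa [Finset.max'_eq_sup', Finset.sup'_eq_sup] at this

lemma mem_WW {r : ℕ} {S : Finset ℕ} {t s : ℕ} :
    s ∈ WW r S t ↔ s ∈ S ∧ s ≤ t ∧ t ≤ s + r := by simp [WW]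

/-- the coefficient formula for `u * (X + C γ)^r` -/
lemma coeff_formula {F : Type*} [Field F] (r : ℕ) (u : F[X]) (γ : F) (t : ℕ) :
    (u * (X + C γ) ^ r).coeff t =
      ∑ s ∈ WW r u.support t, u.coeff s * (r.choose (t - s) : F) * γ ^ (r - (t - s)) := by
  have hsub : WW r u.support t ⊆ Finset.range (t + 1) := by
    intro s hs; rw [mem_WW] at hs; exact Finset.mem_range.mpr (by omega)
  rw [Polynomial.coeff_mul, Finset.Nat.sum_antidiagonal_eq_sum_range_succ_mk,
      ← Finset.sum_subset hsub]
  · exact Finset.sum_congr rfl (fun s hs => by rw [coeff_X_add_C_pow]; ring)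
  · intro s hs hns
    rw [Finset.mem_range] at hs
    rw [mem_WW, Polynomial.mem_support_iff] at hns
    by_cases hu0 : u.coeff s = 0
    · rw [hu0, zero_mul]
    · have hts : r < t - s := by
        push_neg at hns
        have := hns hu0 (by omega)
        omega
      rw [coeff_X_add_C_pow, Nat.choose_eq_zero_of_lt hts]
      simp

/-- The number of evaluation points killing the coefficient is at most the window span. -/
lemma card_zero_le_span {F : Type*} [Field F] [DecidableEq F] (n r : ℕ) (u : F[X])
    (hbin : ∀ j ≤ r, (r.choose j : F) ≠ 0)
    (γ : Fin n → F) (hγ0 : ∀ i, γ i ≠ 0) (hγinj : Function.Injective γ)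
    (t : ℕ) (ht : (WW r u.support t).Nonempty) :
    (Finset.univ.filter fun i : Fin n =>
        (∑ s ∈ WW r u.support t, u.coeff s * (r.choose (t - s) : F) * γ i ^ (r - (t - s))) = 0).card
      ≤ spanW r u.support t := by
  classical
  set W := WW r u.support t with hW
  set smin := W.min' ht with hsmin
  set smax := W.sup id with hsmax
  have hsmaxW : smax ∈ W := sup_id_mem W ht
  have hsminW : smin ∈ W := W.min'_mem ht
  have hminle : ∀ s ∈ W, smin ≤ s := fun s hs => W.min'_le s hs
  have hmaxle : ∀ s ∈ W, s ≤ smax := fun s hs => Finset.le_sup (f := id) hs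
  set Q : F[X] := ∑ s ∈ W, C (u.coeff s * (r.choose (t - s) : F)) * X ^ (s - smin) with hQ
  -- Q is nonzero
  have hQcoeff : Q.coeff (smax - smin) = u.coeff smax * (r.choose (t - smax) : F) := by
    rw [hQ, Polynomial.finset_sum_coeff]
    rw [Finset.sum_eq_single smax]
    · rw [Polynomial.coeff_C_mul, Polynomial.coeff_X_pow, if_pos rfl, mul_one]
    · intro s hs hne
      rw [Polynomial.coeff_C_mul, Polynomial.coeff_X_pow, if_neg, mul_zero]
      have h1 := hminle s hs
      have h2 := hmaxle s hs
      omega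
    · intro h; exact absurd hsmaxW h
  have hQne : Q ≠ 0 := by
    intro h0
    have h1 : u.coeff smax ≠ 0 := Polynomial.mem_support_iff.mp (Finset.mem_filter.mp hsmaxW).1
    have h2 : (r.choose (t - smax) : F) ≠ 0 := by
      apply hbin
      have := (mem_WW.mp hsmaxW).2
      omega
    rw [h0, Polynomial.coeff_zero] at hQcoeff
    exact (mul_ne_zero h1 h2) hQcoeff.symm
  -- Q has small degree
  have hQdeg : Q.natDegree ≤ smax - smin := by
    apply Polynomial.natDegree_sum_le_of_forall_le
    intro s hs
    refine le_trans (Polynomial.natDegree_C_mul_X_pow_le _ _) ?_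
    have h1 := hminle s hs
    have h2 := hmaxle s hs
    omega
  -- evaluation identity
  have heval : ∀ y : F, y ≠ 0 →
      (∑ s ∈ W, u.coeff s * (r.choose (t - s) : F) * y ^ (r - (t - s)))
        = y ^ (r + smin - t) * Q.eval y := by
    intro y hy
    rw [hQ, Polynomial.eval_finset_sum, Finset.mul_sum]
    apply Finset.sum_congr rfl
    intro s hs
    rw [Polynomial.eval_mul, Polynomial.eval_C, Polynomial.eval_pow, Polynomial.eval_X]
    have h1 := hminle s hs
    have hmem := mem_WW.mp hs
    have hmem2 := mem_WW.mp hsminW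
    have hexp : r - (t - s) = (r + smin - t) + (s - smin) := by omega
    rw [hexp, pow_add]
    ring
  -- count the zeros among the roots of Q
  have hcount : (Finset.univ.filter fun i : Fin n =>
      (∑ s ∈ W, u.coeff s * (r.choose (t - s) : F) * γ i ^ (r - (t - s))) = 0).card
      ≤ Q.roots.toFinset.card := by
    apply Finset.card_le_card_of_injOn γ
    · intro i hi
      rw [Finset.mem_coe, Finset.mem_filter] at hi
      rw [Finset.mem_coe, Multiset.mem_toFinset, Polynomial.mem_roots hQne]
      have := heval (γ i) (hγ0 i)
      rw [this] at hi
      rcases mul_eq_zero.mp hi.2 with h | h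
      · exact absurd h (pow_ne_zero _ (hγ0 i))
      · exact h
    · exact fun i _ j _ hij => hγinj hij
  refine le_trans hcount (le_trans (Multiset.toFinset_card_le _) ?_)
  refine le_trans (le_trans (Polynomial.card_roots' Q) hQdeg) ?_
  have := Finset.le_sup (f := fun s => W.sup id - s) hsminW
  exact this

def TT (r : ℕ) (S : Finset ℕ) : Finset ℕ :=
  (Finset.range (S.sup id + r + 1)).filter (fun t => (WW r S t).Nonempty)

lemma mem_TT {r : ℕ} {S : Finset ℕ} {t : ℕ} :
    t ∈ TT r S ↔ t < S.sup id + r + 1 ∧ (WW r S t).Nonempty := by simp [TT]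

theorem comb (n r : ℕ) (hrn : r < n) :
    ∀ S : Finset ℕ, S.Nonempty → n * (r + 1) ≤ ∑ t ∈ TT r S, (n - spanW r S t) := by
  intro S
  induction S using Finset.strongInduction with
  | _ S IH =>
  intro hS
  set M := S.sup id with hMdef
  have hMS : M ∈ S := sup_id_mem S hS
  have hle : ∀ s ∈ S, s ≤ M := fun s hs => Finset.le_sup (f := id) hs
  by_cases hS' : (S.erase M).Nonempty
  case neg =>
    -- S = {M}
    have hSM : S = {M} := by
      apply Finset.eq_singleton_iff_unique_mem.mpr
      refine ⟨hMS, fun x hx => ?_⟩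
      by_contra hne
      exact hS' ⟨x, Finset.mem_erase.mpr ⟨hne, hx⟩⟩
    have hWW : ∀ t, M ≤ t → t ≤ M + r → WW r S t = {M} := by
      intro t h1 h2
      apply Finset.ext; intro s
      rw [mem_WW, hSM]
      simp only [Finset.mem_singleton]
      constructor
      · rintro ⟨h, _⟩; exact h
      · rintro rfl; exact ⟨rfl, h1, h2⟩
    have hTT : TT r S = Finset.Icc M (M + r) := by
      apply Finset.ext; intro t
      rw [mem_TT, Finset.mem_Icc, ← hMdef]
      constructor
      · rintro ⟨h1, s, hs⟩
        rw [mem_WW, hSM, Finset.mem_singleton] at hs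
        obtain ⟨rfl, h⟩ := hs
        exact ⟨h.1, h.2⟩
      · rintro ⟨h1, h2⟩
        refine ⟨by omega, ⟨M, ?_⟩⟩
        rw [mem_WW]
        exact ⟨hMS, h1, h2⟩
    have hspan : ∀ t ∈ TT r S, n - spanW r S t = n := by
      intro t ht
      rw [hTT, Finset.mem_Icc] at ht
      have : spanW r S t = 0 := by
        rw [spanW, hWW t ht.1 ht.2]
        simp
      omega
    rw [Finset.sum_congr rfl hspan, Finset.sum_const, hTT, Nat.card_Icc]
    have : M + r + 1 - M = r + 1 := by omega
    rw [this, smul_eq_mul, Nat.mul_comm]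

  case pos =>
    set S' := S.erase M with hS'def
    have hsub : S' ⊂ S := Finset.erase_ssubset hMS
    set M' := S'.sup id with hM'def
    have hM'S' : M' ∈ S' := sup_id_mem S' hS'
    have hle' : ∀ s ∈ S', s ≤ M' := fun s hs => Finset.le_sup (f := id) hs
    have hM'M : M' < M := by
      have h1 : M' ∈ S := Finset.mem_of_mem_erase hM'S'
      have h2 : M' ≠ M := Finset.ne_of_mem_erase hM'S'
      have := hle M' h1
      omega
    have hMnotS' : M ∉ S' := Finset.notMem_erase M S
    have hins : S = insert M S' := by
      rw [hS'def, Finset.insert_erase hMS]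
    set g := M - M' with hgdef
    -- WW relation
    have hWWrel : ∀ t, WW r S t =
        if M ≤ t ∧ t ≤ M + r then insert M (WW r S' t) else WW r S' t := by
      intro t
      rw [WW, hins, Finset.filter_insert]
      split_ifs
      · rfl
      · rfl
    -- t in TT S' is at most M' + r
    have hTT'le : ∀ t ∈ TT r S', t ≤ M' + r := by
      intro t ht
      obtain ⟨s, hs⟩ := (mem_TT.mp ht).2
      rw [mem_WW] at hs
      have := hle' s hs.1
      omega
    set NEW := Finset.Icc (max M (M' + r + 1)) (M + r) with hNEWdef
    have hdisj : Disjoint (TT r S') NEW := by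
      rw [Finset.disjoint_left]
      intro t ht htn
      rw [hNEWdef, Finset.mem_Icc] at htn
      have := hTT'le t ht
      omega
    have hTTdec : TT r S = TT r S' ∪ NEW := by
      apply Finset.ext; intro t
      rw [Finset.mem_union, mem_TT, mem_TT, hNEWdef, Finset.mem_Icc, ← hMdef, ← hM'def]
      constructor
      · rintro ⟨h1, s, hs⟩
        rw [mem_WW] at hs
        by_cases hc : t ≤ M' + r
        · left
          refine ⟨by omega, ?_⟩
          by_cases hsM : s = M
          · exact ⟨M', mem_WW.mpr ⟨hM'S', by omega, by omega⟩⟩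
          · exact ⟨s, mem_WW.mpr ⟨Finset.mem_erase.mpr ⟨hsM, hs.1⟩, hs.2⟩⟩
        · right
          -- t > M' + r forces s = M
          have hsM : s = M := by
            by_contra hne
            have : s ∈ S' := Finset.mem_erase.mpr ⟨hne, hs.1⟩
            have := hle' s this
            omega
          subst hsM
          omega
      · rintro (⟨h1, s, hs⟩ | h1)
        · rw [mem_WW] at hs
          refine ⟨?_, ⟨s, mem_WW.mpr ⟨Finset.mem_of_mem_erase hs.1, hs.2⟩⟩⟩
          have := hle s (Finset.mem_of_mem_erase hs.1)
          omega
        · exact ⟨by omega, ⟨M, mem_WW.mpr ⟨hMS, by omega, by omega⟩⟩⟩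
    -- on NEW, the window is exactly {M}
    have hNEWspan : ∀ t ∈ NEW, n - spanW r S t = n := by
      intro t ht
      rw [hNEWdef, Finset.mem_Icc] at ht
      have hWWt : WW r S t = {M} := by
        apply Finset.ext; intro s
        rw [mem_WW, Finset.mem_singleton]
        constructor
        · rintro ⟨h1, h2, h3⟩
          by_contra hne
          have : s ∈ S' := Finset.mem_erase.mpr ⟨hne, h1⟩
          have := hle' s this
          omega
        · rintro rfl
          exact ⟨hMS, by omega, by omega⟩
      have : spanW r S t = 0 := by rw [spanW, hWWt]; simp
      omega
    -- per-term comparison on TT S'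
    have hterm : ∀ t ∈ TT r S',
        n - spanW r S' t ≤ (n - spanW r S t) + (if M ≤ t then g else 0) := by
      intro t ht
      by_cases hMt : M ≤ t
      · -- here t ≤ M' + r, window gains M
        have htle : t ≤ M' + r := hTT'le t ht
        have hsplit : WW r S t = insert M (WW r S' t) := by
          rw [hWWrel t, if_pos ⟨hMt, by omega⟩]
        have hM'W : M' ∈ WW r S' t := mem_WW.mpr ⟨hM'S', by omega, by omega⟩
        have hsupW' : (WW r S' t).sup id = M' := by
          apply le_antisymm
          · apply Finset.sup_le; intro s hs; exact hle' s (mem_WW.mp hs).1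
          · exact Finset.le_sup (f := id) hM'W
        have hsupW : (WW r S t).sup id = M := by
          rw [hsplit]
          apply le_antisymm
          · apply Finset.sup_le
            intro s hs
            rcases Finset.mem_insert.mp hs with rfl | hs
            · exact le_rfl
            · exact hle s (Finset.mem_of_mem_erase (mem_WW.mp hs).1)
          · exact Finset.le_sup (f := id) (Finset.mem_insert_self M _)
        have hspanle : spanW r S t ≤ spanW r S' t + g := by
          rw [spanW, hsupW, hsplit, Finset.sup_insert]
          simp only [Nat.sub_self]
          rw [max_eq_right (Nat.zero_le _)]
          apply Finset.sup_le
          intro s hs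
          have hsM' : s ≤ M' := hle' s (mem_WW.mp hs).1
          have h1 : M' - s ≤ spanW r S' t := by
            rw [show M' = (WW r S' t).sup id from hsupW'.symm]
            exact Finset.le_sup (f := fun x => (WW r S' t).sup id - x) hs
          omega
        rw [if_pos hMt]
        omega
      · -- windows coincide
        have : WW r S t = WW r S' t := by
          rw [hWWrel t]
          rw [if_neg (by omega)]
        rw [if_neg hMt, spanW, spanW, this]
        omega
    -- sum the per-term bound
    have hsum1 : ∑ t ∈ TT r S', (n - spanW r S' t) ≤
        (∑ t ∈ TT r S', (n - spanW r S t)) + ∑ t ∈ TT r S', (if M ≤ t then g else 0) := by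
      rw [← Finset.sum_add_distrib]
      exact Finset.sum_le_sum hterm
    have hsum2 : ∑ t ∈ TT r S', (if M ≤ t then g else 0) ≤ g * (M' + r + 1 - M) := by
      rw [← Finset.sum_filter, Finset.sum_const, smul_eq_mul]
      have hsubI : (TT r S').filter (fun t => M ≤ t) ⊆ Finset.Icc M (M' + r) := by
        intro t ht
        rw [Finset.mem_filter] at ht
        rw [Finset.mem_Icc]
        exact ⟨ht.2, hTT'le t ht.1⟩
      have hcard := Finset.card_le_card hsubI
      rw [Nat.card_Icc] at hcard
      calc ((TT r S').filter (fun t => M ≤ t)).card * g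
          ≤ (M' + r + 1 - M) * g := Nat.mul_le_mul_right g hcard
        _ = g * (M' + r + 1 - M) := Nat.mul_comm _ _
    have hNEWcard : NEW.card = M + r + 1 - max M (M' + r + 1) := by
      rw [hNEWdef, Nat.card_Icc]
    have hkey : g * (M' + r + 1 - M) ≤ n * NEW.card := by
      rw [hNEWcard]
      by_cases hgr : g ≤ r
      · have h1 : max M (M' + r + 1) = M' + r + 1 := by omega
        rw [h1]
        have h2 : M + r + 1 - (M' + r + 1) = g := by omega
        rw [h2]
        have h3 : M' + r + 1 - M ≤ n := by omega
        calc g * (M' + r + 1 - M) ≤ g * n := Nat.mul_le_mul_left g h3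
          _ = n * g := Nat.mul_comm _ _
      · have h1 : M' + r + 1 - M = 0 := by omega
        rw [h1, Nat.mul_zero]
        exact Nat.zero_le _
    have hIH := IH S' hsub hS'
    have hNEWsum : ∑ t ∈ NEW, (n - spanW r S t) = n * NEW.card := by
      rw [Finset.sum_congr rfl hNEWspan, Finset.sum_const, smul_eq_mul, Nat.mul_comm]
    rw [hTTdec, Finset.sum_union hdisj, hNEWsum]
    calc n * (r + 1) ≤ ∑ t ∈ TT r S', (n - spanW r S' t) := hIH
      _ ≤ (∑ t ∈ TT r S', (n - spanW r S t)) + ∑ t ∈ TT r S', (if M ≤ t then g else 0) := hsum1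
      _ ≤ (∑ t ∈ TT r S', (n - spanW r S t)) + g * (M' + r + 1 - M) :=
          Nat.add_le_add_left hsum2 _
      _ ≤ (∑ t ∈ TT r S', (n - spanW r S t)) + n * NEW.card := Nat.add_le_add_left hkey _



lemma natDegree_eq_sup_support {F : Type*} [Field F] (u : Polynomial F) (hu : u ≠ 0) :
    u.natDegree = u.support.sup id := by
  apply le_antisymm
  · exact Finset.le_sup (f := id) (Polynomial.natDegree_mem_support_of_nonzero hu)
  · exact Finset.sup_le fun s hs => Polynomial.le_natDegree_of_ne_zero
      (Polynomial.mem_support_iff.mp hs)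

theorem weight_lb {F : Type*} [Field F] [DecidableEq F] (n r : ℕ) (hrn : r < n)
    (hbin : ∀ j ≤ r, (r.choose j : F) ≠ 0)
    (γ : Fin n → F) (hγ0 : ∀ i, γ i ≠ 0) (hγinj : Function.Injective γ)
    (b : Fin n → F) (hb : ∀ i, b i ≠ 0)
    (u : Polynomial F) (hu : u ≠ 0) :
    n * (r + 1) ≤ _root_.polyWeight (fun i => C (b i) * (u * (X + C (γ i)) ^ r)) := by
  classical
  have hn0 : 0 < n := by omega
  set x : Fin n → Polynomial F := fun i => C (b i) * (u * (X + C (γ i)) ^ r) with hx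
  have hxdeg : ∀ i, (x i).natDegree = u.natDegree + r := by
    intro i
    have h1 : (C (b i) : Polynomial F) ≠ 0 := by
      simpa using hb i
    have h2 : (u * (X + C (γ i)) ^ r) ≠ 0 :=
      mul_ne_zero hu (pow_ne_zero _ (Polynomial.X_add_C_ne_zero (γ i)))
    rw [hx, Polynomial.natDegree_mul h1 h2, Polynomial.natDegree_C,
        Polynomial.natDegree_mul hu (pow_ne_zero _ (Polynomial.X_add_C_ne_zero (γ i))),
        Polynomial.natDegree_pow, Polynomial.natDegree_X_add_C]
    ring
  have hD : (Finset.univ.sup fun i => (x i).natDegree) = u.natDegree + r := by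
    apply le_antisymm
    · exact Finset.sup_le fun i _ => le_of_eq (hxdeg i)
    · have i0 : Fin n := ⟨0, hn0⟩
      exact le_of_eq_of_le (hxdeg i0).symm (Finset.le_sup (f := fun i => (x i).natDegree) (Finset.mem_univ i0))
  have hS : u.support.Nonempty := Polynomial.nonempty_support_iff.mpr hu
  have hTTsub : TT r u.support ⊆ Finset.range ((Finset.univ.sup fun i => (x i).natDegree) + 1) := by
    intro t ht
    rw [mem_TT] at ht
    rw [Finset.mem_range, hD, natDegree_eq_sup_support u hu]
    omega
  have hham : ∀ t ∈ TT r u.support,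
      n - spanW r u.support t ≤ hammingNorm (fun i => (x i).coeff t) := by
    intro t ht
    have hWne : (WW r u.support t).Nonempty := (mem_TT.mp ht).2
    have hcoeff : ∀ i, (x i).coeff t =
        b i * ∑ s ∈ WW r u.support t, u.coeff s * (r.choose (t - s) : F) * γ i ^ (r - (t - s)) := by
      intro i
      rw [hx, Polynomial.coeff_C_mul, coeff_formula]
    have hnorm : hammingNorm (fun i => (x i).coeff t) =
        (Finset.univ.filter fun i : Fin n => ¬ ((∑ s ∈ WW r u.support t,
          u.coeff s * (r.choose (t - s) : F) * γ i ^ (r - (t - s))) = 0)).card := by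
      rw [hammingNorm]
      apply Finset.card_bij (fun i _ => i) ?_ (fun i j _ _ h => h) ?_
      · intro i hi
        rw [Finset.mem_filter] at hi ⊢
        refine ⟨Finset.mem_univ i, ?_⟩
        intro h0
        exact hi.2 (by rw [hcoeff i, h0, mul_zero])
      · intro i hi
        rw [Finset.mem_filter] at hi
        refine ⟨i, ?_, rfl⟩
        rw [Finset.mem_filter]
        refine ⟨Finset.mem_univ i, ?_⟩
        intro h0
        rw [hcoeff i] at h0
        rcases mul_eq_zero.mp h0 with h | h
        · exact absurd h (hb i)
        · exact hi.2 h
    rw [hnorm]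
    have hsplit := Finset.card_filter_add_card_filter_not
      (s := (Finset.univ : Finset (Fin n))) (p := fun i : Fin n => (∑ s ∈ WW r u.support t,
          u.coeff s * (r.choose (t - s) : F) * γ i ^ (r - (t - s))) = 0)
    have hzero := card_zero_le_span n r u hbin γ hγ0 hγinj t hWne
    rw [Finset.card_univ, Fintype.card_fin] at hsplit
    omega
  calc n * (r + 1) ≤ ∑ t ∈ TT r u.support, (n - spanW r u.support t) := comb n r hrn u.support hS
    _ ≤ ∑ t ∈ TT r u.support, hammingNorm (fun i => (x i).coeff t) := Finset.sum_le_sum hham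
    _ ≤ _root_.polyWeight x := Finset.sum_le_sum_of_subset hTTsub

end CGCaux

theorem CGC_s_eq_r_MDS
    {F : Type*} [Field F] [Fintype F] [DecidableEq F]
    -- c is a primitive element of F_q
    (c : Fˣ) (hc : ∀ x : Fˣ, x ∈ Subgroup.zpowers c)
    (n r : ℕ) (hr : 1 ≤ r) (hrn : r < n) (hnq : n ≤ Fintype.card F - 1)
    (a : Fin n → F) (ha : ∀ i, a i ≠ 0)
    (hbin : ∀ j ≤ r, (r.choose j : F) ≠ 0)
    -- G(z) = ( a_1^r (z+1)^r , a_2^r (z+c)^r , … , a_n^r (z+c^{n−1})^r )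
    (Gpoly : Fin n → Polynomial F)
    (hG : ∀ i, Gpoly i =
      Polynomial.C (a i ^ r) * (Polynomial.X + Polynomial.C ((c : F) ^ (i : ℕ))) ^ r) :
    -- G(z) is a generator matrix (rank 1) of C = F_q(z)·G(z) …
    Gpoly ≠ 0 ∧
    -- … which is basic: F_q[z]^n / (F_q[z]-row span of G) is free
    Module.Free (Polynomial F)
      ((Fin n → Polynomial F) ⧸ Submodule.span (Polynomial F) {Gpoly}) ∧
    -- … and canonical: its row degree is minimal among all polynomial generator matrices of C
    (∀ x : Fin n → Polynomial F, x ≠ 0 →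
        Submodule.span (RatFunc F) {liftVec x} = Submodule.span (RatFunc F) {liftVec Gpoly} →
        (Finset.univ.sup fun i => (Gpoly i).natDegree) ≤
          Finset.univ.sup fun i => (x i).natDegree) ∧
    -- C has degree r (the max degree of the 1×1 minors of the basic matrix G)
    (Finset.univ.sup fun i => (Gpoly i).natDegree) = r ∧
    -- the free distance of C equals n(r+1), the generalized Singleton bound for (n,1,r):
    -- hence C is an MDS convolutional code
    IsLeast { w : ℕ | ∃ x : Fin n → Polynomial F,
        liftVec x ∈ Submodule.span (RatFunc F) {liftVec Gpoly} ∧ x ≠ 0 ∧ polyWeight x = w }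
      (n * (r + 1)) := by
  have hn0 : 0 < n := by omega
  have hn2 : 2 ≤ n := by omega
  -- basic data
  set γ : Fin n → F := fun i => (c : F) ^ (i : ℕ) with hγdef
  have hγ0 : ∀ i, γ i ≠ 0 := fun i => pow_ne_zero _ (Units.ne_zero c)
  have hcard : orderOf c = Fintype.card F - 1 := by
    rw [orderOf_eq_card_of_forall_mem_zpowers hc, Nat.card_units, Nat.card_eq_fintype_card]
  have hγinj : Function.Injective γ := by
    intro i j hij
    have h1 : (c ^ (i : ℕ) : Fˣ) = c ^ (j : ℕ) := by
      ext
      simpa using hij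
    have h2 := pow_injOn_Iio_orderOf (x := c)
      (by rw [Set.mem_Iio, hcard]; omega) (by rw [Set.mem_Iio, hcard]; omega) h1
    exact Fin.ext h2
  have hb0 : ∀ i, a i ^ r ≠ 0 := fun i => pow_ne_zero _ (ha i)
  have hGne : ∀ i, Gpoly i ≠ 0 := by
    intro i
    rw [hG i]
    exact mul_ne_zero (by simpa using hb0 i) (pow_ne_zero _ (Polynomial.X_add_C_ne_zero _))
  have hGvecne : Gpoly ≠ 0 := by
    intro h
    exact hGne ⟨0, hn0⟩ (congrFun h ⟨0, hn0⟩)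
  -- two distinguished coordinates with coprime entries
  have hne01 : (⟨0, hn0⟩ : Fin n) ≠ ⟨1, hn2⟩ := by
    intro h
    simpa using congrArg Fin.val h
  have hcop : ∀ i j : Fin n, i ≠ j → IsCoprime (Gpoly i) (Gpoly j) := by
    intro i j hij
    have hγne : γ i ≠ γ j := fun h => hij (hγinj h)
    have hsub : γ i - γ j ≠ 0 := sub_ne_zero.mpr hγne
    have hlin : IsCoprime (X + C (γ i)) (X + C (γ j)) := by
      refine ⟨C ((γ i - γ j)⁻¹), -C ((γ i - γ j)⁻¹), ?_⟩
      have h1 : C ((γ i - γ j)⁻¹) * (X + C (γ i)) + -C ((γ i - γ j)⁻¹) * (X + C (γ j))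
          = C ((γ i - γ j)⁻¹ * (γ i - γ j)) := by
        rw [Polynomial.C_mul, Polynomial.C_sub]
        ring
      rw [h1, inv_mul_cancel₀ hsub, Polynomial.C_1]
    have hpow : IsCoprime ((X + C (γ i)) ^ r) ((X + C (γ j)) ^ r) := hlin.pow
    rw [hG i, hG j]
    rw [isCoprime_mul_unit_left_left (Polynomial.isUnit_C.mpr (hb0 i).isUnit),
        isCoprime_mul_unit_left_right (Polynomial.isUnit_C.mpr (hb0 j).isUnit)]
    exact hpow
  -- structure of polynomial codewords
  have hstruct : ∀ x : Fin n → Polynomial F,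
      liftVec x ∈ Submodule.span (RatFunc F) {liftVec Gpoly} → x ≠ 0 →
      ∃ u : Polynomial F, u ≠ 0 ∧ ∀ i, x i = u * Gpoly i := by
    intro x hx hxne
    obtain ⟨f, hf⟩ := Submodule.mem_span_singleton.mp hx
    have hfi : ∀ i, algebraMap (Polynomial F) (RatFunc F) (x i)
        = f * algebraMap (Polynomial F) (RatFunc F) (Gpoly i) := by
      intro i
      exact (congrFun hf i).symm
    have hfd : f * algebraMap (Polynomial F) (RatFunc F) f.denom
        = algebraMap (Polynomial F) (RatFunc F) f.num := by
      nth_rewrite 1 [← RatFunc.num_div_denom f]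
      exact div_mul_cancel₀ _ (RatFunc.algebraMap_ne_zero (RatFunc.denom_ne_zero f))
    have hpoly : ∀ i, x i * f.denom = f.num * Gpoly i := by
      intro i
      apply RatFunc.algebraMap_injective F
      rw [map_mul, map_mul, hfi i, mul_right_comm, hfd]
    have hdvd : ∀ i, f.denom ∣ Gpoly i := by
      intro i
      refine (RatFunc.isCoprime_num_denom f).symm.dvd_of_dvd_mul_left ⟨x i, ?_⟩
      rw [← hpoly i]; ring
    have hdone : f.denom = 1 := by
      obtain ⟨p, q, hpq⟩ := hcop ⟨0, hn0⟩ ⟨1, hn2⟩ hne01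
      have hdd : f.denom ∣ 1 := by
        rw [← hpq]
        exact dvd_add ((hdvd ⟨0, hn0⟩).mul_left p) ((hdvd ⟨1, hn2⟩).mul_left q)
      exact (RatFunc.monic_denom f).eq_one_of_isUnit (isUnit_of_dvd_one hdd)
    have hxi : ∀ i, x i = f.num * Gpoly i := by
      intro i
      have h2 := hpoly i
      rwa [hdone, mul_one] at h2
    refine ⟨f.num, ?_, hxi⟩
    intro h0
    apply hxne
    funext i
    rw [hxi i, h0, zero_mul]
    rfl
  -- degrees
  have hGdeg : ∀ i, (Gpoly i).natDegree = r := by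
    intro i
    rw [hG i, Polynomial.natDegree_mul (by simpa using hb0 i)
        (pow_ne_zero _ (Polynomial.X_add_C_ne_zero _)),
      Polynomial.natDegree_C, Polynomial.natDegree_pow, Polynomial.natDegree_X_add_C]
    ring
  have hsupG : (Finset.univ.sup fun i => (Gpoly i).natDegree) = r := by
    apply le_antisymm
    · exact Finset.sup_le fun i _ => le_of_eq (hGdeg i)
    · exact le_of_eq_of_le (hGdeg ⟨0, hn0⟩).symm
        (Finset.le_sup (f := fun i => (Gpoly i).natDegree) (Finset.mem_univ _))
  -- freeness
  have hfree : Module.Free (Polynomial F)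
      ((Fin n → Polynomial F) ⧸ Submodule.span (Polynomial F) {Gpoly}) := by
    have htf : NoZeroSMulDivisors (Polynomial F)
        ((Fin n → Polynomial F) ⧸ Submodule.span (Polynomial F) {Gpoly}) := by
      constructor
      intro p m hpm
      by_cases hp : p = 0
      · exact Or.inl hp
      right
      obtain ⟨x, rfl⟩ := Submodule.Quotient.mk_surjective _ m
      rw [← Submodule.Quotient.mk_smul, Submodule.Quotient.mk_eq_zero] at hpm
      rw [Submodule.Quotient.mk_eq_zero]
      obtain ⟨s, hs⟩ := Submodule.mem_span_singleton.mp hpm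
      obtain ⟨pp, qq, hpq⟩ := hcop ⟨0, hn0⟩ ⟨1, hn2⟩ hne01
      set t : Polynomial F := pp * x ⟨0, hn0⟩ + qq * x ⟨1, hn2⟩ with ht
      have h1 : s * Gpoly ⟨0, hn0⟩ = p * x ⟨0, hn0⟩ := congrFun hs _
      have h2 : s * Gpoly ⟨1, hn2⟩ = p * x ⟨1, hn2⟩ := congrFun hs _
      have hst : s = p * t := by
        calc s = s * 1 := (mul_one s).symm
          _ = s * (pp * Gpoly ⟨0, hn0⟩ + qq * Gpoly ⟨1, hn2⟩) := by rw [hpq]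
          _ = pp * (s * Gpoly ⟨0, hn0⟩) + qq * (s * Gpoly ⟨1, hn2⟩) := by ring
          _ = pp * (p * x ⟨0, hn0⟩) + qq * (p * x ⟨1, hn2⟩) := by rw [h1, h2]
          _ = p * t := by rw [ht]; ring
      rw [Submodule.mem_span_singleton]
      refine ⟨t, ?_⟩
      funext i
      have hi : s * Gpoly i = p * x i := congrFun hs i
      have hmul : p * (t * Gpoly i) = p * x i := by
        rw [← hi, hst]; ring
      have := mul_left_cancel₀ hp hmul
      exact this
    exact Module.free_of_finite_type_torsion_free'
  -- minimality
  have hmin : ∀ x : Fin n → Polynomial F, x ≠ 0 →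
      Submodule.span (RatFunc F) {liftVec x} = Submodule.span (RatFunc F) {liftVec Gpoly} →
      (Finset.univ.sup fun i => (Gpoly i).natDegree) ≤
        Finset.univ.sup fun i => (x i).natDegree := by
    intro x hxne hspan
    have hx : liftVec x ∈ Submodule.span (RatFunc F) {liftVec Gpoly} := by
      rw [← hspan]
      exact Submodule.mem_span_singleton_self _
    obtain ⟨u, hu, hxi⟩ := hstruct x hx hxne
    apply Finset.sup_le
    intro i _
    have hdle : (Gpoly i).natDegree ≤ (x i).natDegree := by
      rw [hxi i, Polynomial.natDegree_mul hu (hGne i)]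
      omega
    exact le_trans hdle (Finset.le_sup (f := fun i => (x i).natDegree) (Finset.mem_univ i))
  -- weight of G itself
  have hwG : polyWeight Gpoly = n * (r + 1) := by
    rw [polyWeight, hsupG]
    have hcoef : ∀ t ∈ Finset.range (r + 1),
        hammingNorm (fun i => (Gpoly i).coeff t) = n := by
      intro t ht
      rw [Finset.mem_range] at ht
      have hne : ∀ i, (Gpoly i).coeff t ≠ 0 := by
        intro i
        rw [hG i, Polynomial.coeff_C_mul, coeff_X_add_C_pow]
        exact mul_ne_zero (hb0 i)
          (mul_ne_zero (pow_ne_zero _ (hγ0 i)) (hbin t (by omega)))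
      unfold hammingNorm
      rw [Finset.filter_true_of_mem (fun i _ => hne i), Finset.card_univ, Fintype.card_fin]
    rw [Finset.sum_congr rfl hcoef, Finset.sum_const, Finset.card_range, smul_eq_mul, mul_comm]
  -- lower bound for all nonzero codewords
  have hlb : ∀ x : Fin n → Polynomial F,
      liftVec x ∈ Submodule.span (RatFunc F) {liftVec Gpoly} → x ≠ 0 →
      n * (r + 1) ≤ polyWeight x := by
    intro x hx hxne
    obtain ⟨u, hu, hxi⟩ := hstruct x hx hxne
    have hxeq : x = fun i => C (a i ^ r) * (u * (X + C (γ i)) ^ r) := by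
      funext i
      rw [hxi i, hG i]
      ring
    rw [hxeq]
    exact CGCaux.weight_lb n r hrn hbin γ hγ0 hγinj _ hb0 u hu
  refine ⟨hGvecne, hfree, hmin, hsupG, ⟨⟨Gpoly, Submodule.mem_span_singleton_self _,
      hGvecne, hwG⟩, ?_⟩⟩
  rintro w ⟨x, hx, hxne, rfl⟩
  exact hlb x hx hxne
end

section
/- Let F_q be a finite field with q elements, c ∈ F_q a primitive element (a generator of F_q^×), and let n, r be integers with 1 ≤ r < n ≤ q−1. Let a_1, …, a_n ∈ F_q^× and assume the binomial coefficients C(r,i) are nonzero in F_q for all 0 ≤ i ≤ r. For 0 ≤ i ≤ r define the row vector G_i = C(r,i)·( a_1^r, a_2^r c^{r−i}, a_3^r c^{2(r−i)}, …, a_n^r c^{(n−1)(r−i)} ) ∈ F_q^n. Then for each 0 ≤ j ≤ r, the (j+1)×n matrix with rows G_0, …, G_j and the (j+1)×n matrix with rows G_{r−j}, …, G_r both have rank j+1, and their row spans are MDS linear codes of length n and dimension j+1, i.e., of minimum Hamming distance n−j. -/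
open Polynomial Finset

/-- `d` is the minimum Hamming weight of the nonzero vectors of the linear code `C`
(for a linear code this is its minimum Hamming distance). -/
def minWeightIsLeast {F : Type*} [Field F] [DecidableEq F] {n : ℕ}
    (C : Submodule F (Fin n → F)) (d : ℕ) : Prop :=
  IsLeast { w : ℕ | ∃ x ∈ C, x ≠ 0 ∧ hammingNorm x = w } d

lemma grs_eval_comb {F : Type*} [Field F] {n j : ℕ}
    (x y : Fin n → F) (lam : Fin (j+1) → F)
    (W : Fin (j+1) → Fin n → F)
    (hW : ∀ m k, W m k = lam m * (y k * x k ^ (j - (m:ℕ))))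
    (g : Fin (j+1) → F) (k : Fin n) :
    (∑ m, g m • W m) k
      = y k * (∑ m : Fin (j+1), C (g m * lam m) * X ^ (j - (m:ℕ))).eval (x k) := by
  simp only [Finset.sum_apply, Pi.smul_apply, smul_eq_mul, hW, eval_finset_sum,
    eval_mul, eval_C, eval_pow, eval_X, Finset.mul_sum]
  exact Finset.sum_congr rfl fun m _ => by ring

lemma grs_coeff {F : Type*} [Field F] {j : ℕ} (g lam : Fin (j+1) → F) (m0 : Fin (j+1)) :
    (∑ m : Fin (j+1), C (g m * lam m) * X ^ (j - (m:ℕ))).coeff (j - (m0:ℕ))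
      = g m0 * lam m0 := by
  rw [finset_sum_coeff, Finset.sum_eq_single m0]
  · rw [coeff_C_mul, coeff_X_pow, if_pos rfl, mul_one]
  · intro m _ hm
    rw [coeff_C_mul, coeff_X_pow, if_neg, mul_zero]
    intro h
    have h1 := m.isLt
    have h2 := m0.isLt
    exact hm (Fin.ext (by omega))
  · simp

lemma grs_natDegree {F : Type*} [Field F] {j : ℕ} (g lam : Fin (j+1) → F) :
    (∑ m : Fin (j+1), C (g m * lam m) * X ^ (j - (m:ℕ))).natDegree ≤ j := by
  apply Polynomial.natDegree_sum_le_of_forall_le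
  intro m _
  exact (natDegree_C_mul_le _ _).trans (by simp [Nat.sub_le])

lemma grs_eval_reflect {F : Type*} [Field F] {j : ℕ}
    (p : F[X]) (hdeg : p.natDegree ≤ j) (t : F) :
    ∑ m : Fin (j+1), p.coeff (j - (m:ℕ)) * t ^ (j - (m:ℕ)) = p.eval t := by
  rw [Fin.sum_univ_eq_sum_range (fun i => p.coeff (j - i) * t ^ (j - i))]
  have := Finset.sum_range_reflect (fun i => p.coeff i * t ^ i) (j + 1)
  simp only [Nat.add_sub_cancel] at this
  rw [this]
  rw [Polynomial.eval_eq_sum_range' (Nat.lt_succ_of_le hdeg)]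

lemma grs_zeros_card {F : Type*} [Field F] [DecidableEq F] {n j : ℕ}
    (x : Fin n → F) (hx : Function.Injective x)
    (p : F[X]) (hp : p ≠ 0) (hdeg : p.natDegree ≤ j) :
    #{k : Fin n | p.eval (x k) = 0} ≤ j := by
  classical
  have himg : ({k : Fin n | p.eval (x k) = 0} : Finset (Fin n)).image x ⊆ p.roots.toFinset := by
    intro t ht
    rcases Finset.mem_image.1 ht with ⟨k, hk, rfl⟩
    rw [Multiset.mem_toFinset, mem_roots hp]
    exact (Finset.mem_filter.1 hk).2
  calc #{k : Fin n | p.eval (x k) = 0}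
      = #(({k : Fin n | p.eval (x k) = 0} : Finset (Fin n)).image x) :=
        (Finset.card_image_of_injective _ hx).symm
    _ ≤ #p.roots.toFinset := Finset.card_le_card himg
    _ ≤ Multiset.card p.roots := Multiset.toFinset_card_le _
    _ ≤ p.natDegree := p.card_roots'
    _ ≤ j := hdeg

lemma grs_norm_lower {F : Type*} [Field F] [DecidableEq F] {n j : ℕ}
    (x y : Fin n → F) (hx : Function.Injective x) (hy : ∀ k, y k ≠ 0)
    (p : F[X]) (hp : p ≠ 0) (hdeg : p.natDegree ≤ j)
    (v : Fin n → F) (hv : ∀ k, v k = y k * p.eval (x k)) :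
    n - j ≤ hammingNorm v := by
  classical
  have hsplit : #{k : Fin n | v k ≠ 0} + #{k : Fin n | ¬ v k ≠ 0} = n := by
    rw [Finset.card_filter_add_card_filter_not]
    simp
  have hzero : #{k : Fin n | ¬ v k ≠ 0} ≤ j := by
    refine le_trans (Finset.card_le_card ?_) (grs_zeros_card x hx p hp hdeg)
    intro k hk
    simp only [Finset.mem_filter, Finset.mem_univ, true_and, not_not] at hk ⊢
    exact (mul_eq_zero.1 ((hv k).symm.trans hk)).resolve_left (hy k)
  unfold hammingNorm
  omega

lemma grs_main {F : Type*} [Field F] [DecidableEq F] {n j : ℕ} (hj : j < n)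
    (x y : Fin n → F) (hx : Function.Injective x) (hy : ∀ k, y k ≠ 0)
    (lam : Fin (j+1) → F) (hlam : ∀ m, lam m ≠ 0)
    (W : Fin (j+1) → Fin n → F)
    (hW : ∀ m k, W m k = lam m * (y k * x k ^ (j - (m:ℕ)))) :
    LinearIndependent F W ∧
      minWeightIsLeast (Submodule.span F (Set.range W)) (n - j) := by
  classical
  have hli : LinearIndependent F W := by
    rw [Fintype.linearIndependent_iff]
    intro g hg m0
    set p : F[X] := ∑ m : Fin (j+1), C (g m * lam m) * X ^ (j - (m:ℕ)) with hpdef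
    have hroots : ∀ k : Fin n, p.eval (x k) = 0 := by
      intro k
      have h := grs_eval_comb x y lam W hW g k
      rw [hg] at h
      simp only [Pi.zero_apply] at h
      exact (mul_eq_zero.1 h.symm).resolve_left (hy k)
    have hp0 : p = 0 := by
      by_contra hp
      have h1 := grs_zeros_card x hx p hp (grs_natDegree g lam)
      have h2 : ({k : Fin n | p.eval (x k) = 0} : Finset (Fin n)) = Finset.univ := by
        ext k; simp [hroots k]
      rw [h2, Finset.card_univ, Fintype.card_fin] at h1
      omega
    have hc := grs_coeff g lam m0
    rw [← hpdef, hp0, coeff_zero] at hc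
    exact (mul_eq_zero.1 hc.symm).resolve_right (hlam m0)
  refine ⟨hli, ?_, ?_⟩
  · -- membership: a codeword of weight exactly n - j
    set p0 : F[X] := ∏ i : Fin j, (X - C (x (Fin.castLE hj.le i))) with hp0def
    have hmonic : p0.Monic := monic_prod_of_monic _ _ fun i _ => monic_X_sub_C _
    have hdeg0 : p0.natDegree ≤ j := by
      rw [hp0def]
      refine (natDegree_prod_le _ _).trans ?_
      simp [natDegree_X_sub_C]
    set g : Fin (j+1) → F := fun m => p0.coeff (j - (m:ℕ)) / lam m with hgdef
    have hcomb : ∀ k, (∑ m, g m • W m) k = y k * p0.eval (x k) := by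
      intro k
      rw [grs_eval_comb x y lam W hW g k]
      congr 1
      rw [show (∑ m : Fin (j+1), C (g m * lam m) * X ^ (j - (m:ℕ)))
          = ∑ m : Fin (j+1), C (p0.coeff (j - (m:ℕ))) * X ^ (j - (m:ℕ)) from
        Finset.sum_congr rfl fun m _ => by
          rw [show g m * lam m = p0.coeff (j - (m:ℕ)) from div_mul_cancel₀ _ (hlam m)]]
      rw [eval_finset_sum]
      simp only [eval_mul, eval_C, eval_pow, eval_X]
      exact grs_eval_reflect p0 hdeg0 (x k)
    have heval : ∀ k : Fin n, p0.eval (x k) = 0 ↔ (k : ℕ) < j := by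
      intro k
      rw [hp0def, eval_prod]
      simp only [eval_sub, eval_X, eval_C, Finset.prod_eq_zero_iff, Finset.mem_univ,
        true_and, sub_eq_zero]
      constructor
      · rintro ⟨i, hi⟩
        rw [hx hi]
        simpa using i.isLt
      · intro hk
        exact ⟨⟨(k : ℕ), hk⟩, congrArg x (Fin.ext rfl)⟩
    refine ⟨∑ m, g m • W m, Submodule.sum_mem _ fun m _ =>
      Submodule.smul_mem _ _ (Submodule.subset_span ⟨m, rfl⟩), ?_, ?_⟩
    · intro h0
      have h1 : y ⟨j, hj⟩ * p0.eval (x ⟨j, hj⟩) = 0 := by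
        rw [← hcomb ⟨j, hj⟩, h0]; rfl
      have h2 : p0.eval (x ⟨j, hj⟩) ≠ 0 := by
        rw [Ne, heval ⟨j, hj⟩]; exact lt_irrefl j
      exact h2 ((mul_eq_zero.1 h1).resolve_left (hy ⟨j, hj⟩))
    · have hset : ({k : Fin n | (∑ m, g m • W m) k ≠ 0} : Finset (Fin n))
          = ({k : Fin n | ¬ (k : ℕ) < j} : Finset (Fin n)) := by
        ext k
        simp only [Finset.mem_filter, Finset.mem_univ, true_and, hcomb k,
          mul_ne_zero_iff]
        rw [← heval k]
        constructor
        · intro h; exact h.2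
        · intro h; exact ⟨hy k, h⟩
      have hlt : ({k : Fin n | (k : ℕ) < j} : Finset (Fin n)) = Finset.Iio ⟨j, hj⟩ := by
        ext k; simp [Fin.lt_def]
      have hcards : #({k : Fin n | (k : ℕ) < j} : Finset (Fin n)) = j := by
        rw [hlt, Fin.card_Iio]
      have hsplit : #({k : Fin n | (k : ℕ) < j} : Finset (Fin n))
          + #({k : Fin n | ¬ (k : ℕ) < j} : Finset (Fin n)) = n := by
        rw [Finset.card_filter_add_card_filter_not]; simp
      unfold hammingNorm
      rw [hset]
      omega
  · -- lower bound
    rintro w ⟨v, hvmem, hvne, rfl⟩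
    rw [Submodule.mem_span_range_iff_exists_fun] at hvmem
    obtain ⟨g, hg⟩ := hvmem
    set p : F[X] := ∑ m : Fin (j+1), C (g m * lam m) * X ^ (j - (m:ℕ)) with hpdef
    have hv : ∀ k, v k = y k * p.eval (x k) := by
      intro k
      rw [← hg]
      exact grs_eval_comb x y lam W hW g k
    have hp : p ≠ 0 := by
      intro h
      apply hvne
      funext k
      rw [hv k, h, eval_zero, mul_zero]
      rfl
    exact grs_norm_lower x y hx hy p hp (grs_natDegree g lam) v hv

theorem rows_span_MDS_codes
    {F : Type*} [Field F] [Fintype F] [DecidableEq F]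
    -- c is a primitive element of F_q
    (c : Fˣ) (hc : ∀ x : Fˣ, x ∈ Subgroup.zpowers c)
    (n r : ℕ) (hr : 1 ≤ r) (hrn : r < n) (hnq : n ≤ Fintype.card F - 1)
    (a : Fin n → F) (ha : ∀ i, a i ≠ 0)
    (hbin : ∀ i ≤ r, (r.choose i : F) ≠ 0)
    -- G_i = C(r,i)·( a_1^r , a_2^r c^{r−i} , … , a_n^r c^{(n−1)(r−i)} )
    (G : ℕ → Fin n → F)
    (hG : ∀ i, i ≤ r → ∀ k : Fin n,
      G i k = (r.choose i : F) * (a k ^ r * (c : F) ^ ((k : ℕ) * (r - i)))) :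
    ∀ j ≤ r,
      -- the matrix with rows G_0, …, G_j has rank j+1 and its row span is MDS
      (LinearIndependent F (fun m : Fin (j + 1) => G (m : ℕ)) ∧
        minWeightIsLeast
          (Submodule.span F (Set.range fun m : Fin (j + 1) => G (m : ℕ))) (n - j)) ∧
      -- the matrix with rows G_{r−j}, …, G_r has rank j+1 and its row span is MDS
      (LinearIndependent F (fun m : Fin (j + 1) => G (r - j + (m : ℕ))) ∧
        minWeightIsLeast
          (Submodule.span F (Set.range fun m : Fin (j + 1) => G (r - j + (m : ℕ)))) (n - j)) := by
  intro j hjr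
  have hjn : j < n := lt_of_le_of_lt hjr hrn
  have horder : orderOf c = Fintype.card F - 1 := by
    rw [orderOf_eq_card_of_forall_mem_zpowers hc, Nat.card_eq_fintype_card, Fintype.card_units]
  have hxinj : Function.Injective (fun k : Fin n => ((c : F) ^ (k : ℕ))) := by
    intro k1 k2 h
    have hu : c ^ (k1 : ℕ) = c ^ (k2 : ℕ) := by
      apply Units.ext
      rw [Units.val_pow_eq_pow_val, Units.val_pow_eq_pow_val]
      exact h
    have h1 : (k1 : ℕ) ∈ Set.Iio (orderOf c) := by
      rw [horder]; exact Set.mem_Iio.2 (lt_of_lt_of_le k1.isLt hnq)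
    have h2 : (k2 : ℕ) ∈ Set.Iio (orderOf c) := by
      rw [horder]; exact Set.mem_Iio.2 (lt_of_lt_of_le k2.isLt hnq)
    exact Fin.ext (pow_injOn_Iio_orderOf h1 h2 hu)
  have hcne : (c : F) ≠ 0 := Units.ne_zero c
  constructor
  · -- rows G_0, …, G_j
    apply grs_main hjn (fun k => (c : F) ^ (k : ℕ))
      (fun k => a k ^ r * (c : F) ^ ((k : ℕ) * (r - j))) hxinj
      (fun k => mul_ne_zero (pow_ne_zero _ (ha k)) (pow_ne_zero _ hcne))
      (fun m => (r.choose (m : ℕ) : F))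
      (fun m => hbin (m : ℕ) (le_trans (Nat.le_of_lt_succ m.isLt) hjr))
    intro m k
    rw [hG (m : ℕ) (le_trans (Nat.le_of_lt_succ m.isLt) hjr) k]
    have hm : (m : ℕ) ≤ j := Nat.le_of_lt_succ m.isLt
    have he : (k : ℕ) * (r - (m : ℕ)) = (k : ℕ) * (r - j) + (k : ℕ) * (j - (m : ℕ)) := by
      rw [← Nat.mul_add]
      congr 1
      omega
    rw [he, pow_add, ← pow_mul]
    ring_nf
  · -- rows G_{r-j}, …, G_r
    apply grs_main hjn (fun k => (c : F) ^ (k : ℕ))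
      (fun k => a k ^ r) hxinj
      (fun k => pow_ne_zero _ (ha k))
      (fun m => (r.choose (r - j + (m : ℕ)) : F))
      (fun m => hbin (r - j + (m : ℕ)) (by have := Nat.le_of_lt_succ m.isLt; omega))
    intro m k
    have hm : (m : ℕ) ≤ j := Nat.le_of_lt_succ m.isLt
    rw [hG (r - j + (m : ℕ)) (by omega) k]
    have he : r - (r - j + (m : ℕ)) = j - (m : ℕ) := by omega
    rw [he, pow_mul]
end

section
/- Let F_q be a finite field, a ∈ F_q^× an element of multiplicative order at least n, and let r be an integer with 0 ≤ r < n. Set G(z) = Σ_{i=0}^{r} z^i · ( 1, a^i, a^{2i}, …, a^{(n−1)i} ) ∈ F_q[z]^n. Then G(z) is a basic generator matrix of the one-dimensional convolutional code C = F_q(z)·G(z) ⊆ F_q(z)^n, C has degree r, and the free distance of C equals n(r+1); hence C is an MDS convolutional code with parameters (n, 1, r). -/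
open Polynomial Finset

set_option linter.unusedSectionVars false
set_option synthInstance.maxHeartbeats 1000000
set_option maxHeartbeats 1000000


section Aux
variable {F : Type*} [Field F] [DecidableEq F]

lemma aux_pow_inj {a : F} {n : ℕ} (h : n ≤ orderOf a) :
    ∀ i < n, ∀ j < n, a ^ i = a ^ j → i = j := by
  intro i hi j hj hij
  exact pow_injOn_Iio_orderOf (lt_of_lt_of_le hi h) (lt_of_lt_of_le hj h) hij

lemma aux_bezout (n r : ℕ) (hrn : r < n) (a : F) (horder : n ≤ orderOf a) :
    ∃ c : Fin n → F, ∀ i ≤ r,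
      (∑ k : Fin n, c k * a ^ ((k : ℕ) * i)) = if i = 0 then 1 else 0 := by
  set W : Matrix (Fin (r+1)) (Fin (r+1)) F :=
    Matrix.vandermonde (fun i : Fin (r+1) => a ^ (i : ℕ)) with hW
  have hdet : IsUnit W.det := by
    rw [hW, Matrix.det_vandermonde, isUnit_iff_ne_zero]
    refine Finset.prod_ne_zero_iff.2 fun i _ => Finset.prod_ne_zero_iff.2 fun j hj => ?_
    rw [Finset.mem_Ioi] at hj
    have hij : (i : ℕ) ≠ (j : ℕ) := by exact_mod_cast (Fin.lt_iff_val_lt_val.1 hj).ne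
    intro hzero
    exact hij (aux_pow_inj horder i (lt_of_lt_of_le i.isLt (by omega)) j
      (lt_of_lt_of_le j.isLt (by omega)) (sub_eq_zero.1 hzero).symm)
  set c' : Fin (r+1) → F := Matrix.vecMul (Pi.single 0 1) W⁻¹ with hc'
  have hvm : Matrix.vecMul c' W = Pi.single 0 1 := by
    rw [hc', Matrix.vecMul_vecMul, Matrix.nonsing_inv_mul _ hdet, Matrix.vecMul_one]
  refine ⟨fun k => if h : (k : ℕ) < r + 1 then c' ⟨(k : ℕ), h⟩ else 0, fun i hi => ?_⟩
  have hi' : i < r + 1 := by omega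
  have := congrFun hvm ⟨i, hi'⟩
  rw [Matrix.vecMul, Pi.single_apply] at this
  simp only [dotProduct, hW, Matrix.vandermonde_apply] at this
  calc (∑ k : Fin n, (if h : (k : ℕ) < r + 1 then c' ⟨(k : ℕ), h⟩ else 0) * a ^ ((k : ℕ) * i))
      = ∑ k ∈ Finset.range n, (if h : k < r + 1 then c' ⟨k, h⟩ else 0) * a ^ (k * i) := by
        rw [Finset.sum_range fun k => (if h : k < r + 1 then c' ⟨k, h⟩ else 0) * a ^ (k * i)]
    _ = ∑ k ∈ Finset.range (r+1), (if h : k < r + 1 then c' ⟨k, h⟩ else 0) * a ^ (k * i) := by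
        refine (Finset.sum_subset (Finset.range_subset_range.2 (by omega)) ?_).symm
        intro k _ hk
        rw [Finset.mem_range] at hk
        rw [dif_neg hk, zero_mul]
    _ = ∑ k : Fin (r+1), c' k * a ^ ((k : ℕ) * i) := by
        rw [Finset.sum_range fun k => (if h : k < r + 1 then c' ⟨k, h⟩ else 0) * a ^ (k * i)]
        exact Finset.sum_congr rfl fun k _ => by rw [dif_pos k.isLt]
    _ = if i = 0 then 1 else 0 := by
        simp only [Fin.ext_iff, Fin.val_zero] at this
        rw [← this]
        refine Finset.sum_congr rfl fun k _ => by rw [← pow_mul, mul_comm (k : ℕ) i]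
        
end Aux

section Aux2
variable {F : Type*} [Field F] [DecidableEq F]

lemma aux_coeff (r : ℕ) (f : ℕ → F) (i : ℕ) :
    (∑ j ∈ Finset.range (r+1), C (f j) * X ^ j).coeff i = if i ≤ r then f i else 0 := by
  rw [finset_sum_coeff]
  simp only [coeff_C_mul, coeff_X_pow, mul_ite, mul_one, mul_zero]
  rw [Finset.sum_ite_eq (Finset.range (r+1)) i f]
  simp [Nat.lt_succ_iff]

lemma aux_natDegree (r : ℕ) (f : ℕ → F) (hf : f r ≠ 0) :
    (∑ j ∈ Finset.range (r+1), C (f j) * X ^ j).natDegree = r := by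
  refine le_antisymm ?_ (le_natDegree_of_ne_zero ?_)
  · refine natDegree_le_iff_coeff_eq_zero.2 fun m hm => ?_
    rw [aux_coeff, if_neg (by omega)]
  · rw [aux_coeff, if_pos le_rfl]; exact hf

lemma aux_bezout_poly {n r : ℕ} {a : F} (c : Fin n → F)
    (hc : ∀ i ≤ r, (∑ k : Fin n, c k * a ^ ((k : ℕ) * i)) = if i = 0 then 1 else 0)
    (Gpoly : Fin n → Polynomial F)
    (hG : ∀ k : Fin n, Gpoly k =
      ∑ i ∈ Finset.range (r + 1), C (a ^ ((k : ℕ) * i)) * X ^ i) :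
    (∑ k : Fin n, C (c k) * Gpoly k) = 1 := by
  calc (∑ k : Fin n, C (c k) * Gpoly k)
      = ∑ k : Fin n, ∑ i ∈ Finset.range (r+1), C (c k * a ^ ((k : ℕ) * i)) * X ^ i := by
        refine Finset.sum_congr rfl fun k _ => ?_
        rw [hG k, Finset.mul_sum]
        exact Finset.sum_congr rfl fun i _ => by rw [map_mul, mul_assoc]
    _ = ∑ i ∈ Finset.range (r+1), C (∑ k : Fin n, c k * a ^ ((k : ℕ) * i)) * X ^ i := by
        rw [Finset.sum_comm]
        exact Finset.sum_congr rfl fun i _ => by rw [map_sum, Finset.sum_mul]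
    _ = ∑ i ∈ Finset.range (r+1), (if i = 0 then 1 else 0 : Polynomial F) := by
        refine Finset.sum_congr rfl fun i hi => ?_
        rw [hc i (Nat.lt_succ_iff.1 (Finset.mem_range.1 hi))]
        rcases eq_or_ne i 0 with h | h <;> simp [h]
    _ = 1 := by rw [Finset.sum_ite_eq' (Finset.range (r+1)) 0 (fun _ => (1:Polynomial F))]
                simp

end Aux2
section W
variable {F : Type*} [Field F] [DecidableEq F]

lemma aux_pow_inj' {a : F} {n : ℕ} (h : n ≤ orderOf a) :
    ∀ i < n, ∀ j < n, a ^ i = a ^ j → i = j := by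
  intro i hi j hj hij
  exact pow_injOn_Iio_orderOf (lt_of_lt_of_le hi h) (lt_of_lt_of_le hj h) hij

lemma aux_weight (n r : ℕ) (hrn : r < n) (a : F) (ha : a ≠ 0)
    (horder : n ≤ orderOf a) (G : Fin n → Polynomial F)
    (hGc : ∀ (k : Fin n) (i : ℕ), (G k).coeff i = if i ≤ r then a ^ ((k : ℕ) * i) else 0)
    (q : Polynomial F) (hq : q ≠ 0) :
    n * (r + 1) ≤ polyWeight (fun k => q * G k) := by
  classical
  have hn : 0 < n := by omega
  have hGne : ∀ k, G k ≠ 0 := by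
    intro k h
    have := hGc k 0
    rw [h] at this
    simp at this
  have hGdeg : ∀ k, (G k).natDegree = r := by
    intro k
    refine le_antisymm (natDegree_le_iff_coeff_eq_zero.2 fun i hi => ?_)
      (le_natDegree_of_ne_zero ?_)
    · rw [hGc, if_neg (by omega)]
    · rw [hGc, if_pos le_rfl]; exact pow_ne_zero _ ha
  set m := q.natDegree with hm
  set v := q.natTrailingDegree with hv
  have hvm : v ≤ m := natTrailingDegree_le_natDegree q
  have hvS : v ∈ q.support := by
    rw [mem_support_iff]; exact trailingCoeff_nonzero_iff_nonzero.2 hq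
  have hmS : m ∈ q.support := natDegree_mem_support_of_nonzero hq
  have hSv : ∀ j ∈ q.support, v ≤ j := fun j hj => natTrailingDegree_le_of_ne_zero (mem_support_iff.1 hj)
  have hSm : ∀ j ∈ q.support, j ≤ m := fun j hj => le_natDegree_of_mem_supp j hj
  have hdeg : ∀ k, (q * G k).natDegree = m + r := by
    intro k; rw [natDegree_mul hq (hGne k), hGdeg]
  have hsup : (Finset.univ.sup fun k : Fin n => (q * G k).natDegree) = m + r := by
    haveI : Nonempty (Fin n) := ⟨⟨0, hn⟩⟩
    apply le_antisymm
    · exact Finset.sup_le fun k _ => le_of_eq (hdeg k)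
    · rw [← hdeg ⟨0, hn⟩]
      exact Finset.le_sup (f := fun k : Fin n => (q * G k).natDegree) (Finset.mem_univ (⟨0, hn⟩ : Fin n))
  -- windows
  set W : ℕ → Finset ℕ := fun t => q.support.filter (fun j => j ≤ t ∧ t ≤ j + r) with hWdef
  have hcoeff : ∀ (k : Fin n) (t : ℕ),
      (q * G k).coeff t = ∑ j ∈ W t, q.coeff j * a ^ ((k : ℕ) * (t - j)) := by
    intro k t
    rw [coeff_mul, Finset.Nat.sum_antidiagonal_eq_sum_range_succ_mk]
    have h1 : ∀ j ∈ Finset.range (t+1),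
        q.coeff j * (G k).coeff (t - j) =
        q.coeff j * (if t - j ≤ r then a ^ ((k : ℕ) * (t - j)) else 0) := by
      intro j _; rw [hGc]
    rw [Finset.sum_congr rfl h1]
    rw [← Finset.sum_subset (s₁ := W t) (fun j hj => by
        rw [Finset.mem_range]
        have := (Finset.mem_filter.1 hj).2.1
        omega)
      (fun j hj hjW => ?_)]
    · refine Finset.sum_congr rfl fun j hj => ?_
      have h2 := (Finset.mem_filter.1 hj).2
      rw [if_pos (by omega)]
    · rw [Finset.mem_range] at hj
      rw [hWdef] at hjW
      simp only [Finset.mem_filter, mem_support_iff, not_and, not_le] at hjW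
      by_cases hqj : q.coeff j = 0
      · rw [hqj, zero_mul]
      · have := hjW hqj (by omega)
        rw [if_neg (by omega), mul_zero]
  -- counting zero coordinates
  set z : ℕ → ℕ := fun t => (Finset.univ.filter fun k : Fin n => (q * G k).coeff t = 0).card
    with hz
  -- root bound for nonempty windows
  have hzbound : ∀ t (hne : (W t).Nonempty), z t ≤ (W t).max' hne - (W t).min' hne := by
    intro t hne
    set M := (W t).max' hne with hM
    set L := (W t).min' hne with hL
    have hMW : M ∈ W t := (W t).max'_mem hne
    have hLW : L ∈ W t := (W t).min'_mem hne
    have hMt : M ≤ t := (Finset.mem_filter.1 hMW).2.1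
    set R : Polynomial F := ∑ j ∈ W t, C (q.coeff j) * X ^ (M - j) with hR
    have hR0 : R.coeff 0 = q.coeff M := by
      rw [hR, finset_sum_coeff]
      rw [Finset.sum_eq_single M]
      · simp
      · intro j hj hjM
        have hjle : j ≤ M := (W t).le_max' j hj
        rw [coeff_C_mul, coeff_X_pow, if_neg (by omega), mul_zero]
      · intro h; exact absurd hMW h
    have hRne : R ≠ 0 := fun h => by
      rw [h, coeff_zero] at hR0
      exact (mem_support_iff.1 (Finset.mem_of_mem_filter M hMW)) hR0.symm
    have hRdeg : R.natDegree ≤ M - L := by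
      refine natDegree_sum_le_of_forall_le _ _ fun j hj => ?_
      refine le_trans (natDegree_C_mul_X_pow_le _ _) ?_
      have := (W t).min'_le j hj
      omega
    have heval : ∀ k : Fin n, (q * G k).coeff t =
        a ^ ((k : ℕ) * (t - M)) * R.eval (a ^ (k : ℕ)) := by
      intro k
      rw [hcoeff, hR, eval_finset_sum, Finset.mul_sum]
      refine Finset.sum_congr rfl fun j hj => ?_
      have h2 := (Finset.mem_filter.1 hj).2
      have hjM : j ≤ M := (W t).le_max' j hj
      rw [eval_mul, eval_C, eval_pow, eval_X, ← pow_mul]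
      rw [show (k : ℕ) * (t - j) = (k : ℕ) * (t - M) + (k : ℕ) * (M - j) by
        rw [← Nat.mul_add]; congr 1; omega]
      rw [pow_add]; ring
    have hsub : (Finset.univ.filter fun k : Fin n => (q * G k).coeff t = 0).card
        ≤ R.roots.toFinset.card := by
      refine Finset.card_le_card_of_injOn (fun k => a ^ (k : ℕ)) ?_ ?_
      · intro k hk
        rw [Finset.mem_coe, Finset.mem_filter] at hk
        rw [heval k] at hk
        have h3 : R.eval (a ^ (k : ℕ)) = 0 := by
          rcases mul_eq_zero.1 hk.2 with h | h
          · exact absurd h (pow_ne_zero _ ha)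
          · exact h
        rw [Finset.mem_coe, Multiset.mem_toFinset, mem_roots']
        exact ⟨hRne, h3⟩
      · intro k₁ _ k₂ _ hkk
        exact Fin.ext (aux_pow_inj' horder _ k₁.isLt _ k₂.isLt hkk)
    calc z t ≤ R.roots.toFinset.card := hsub
      _ ≤ Multiset.card R.roots := R.roots.toFinset_card_le
      _ ≤ R.natDegree := card_roots' R
      _ ≤ M - L := hRdeg
  -- intervals
  set I := Finset.Icc v (m + r) with hI
  set J := Finset.Ico v m with hJ
  set P : ℕ → ℕ → Prop := fun t j =>
    (∃ s ∈ q.support, s ≤ j ∧ t ≤ s + r) ∧ (∃ s ∈ q.support, j < s ∧ s ≤ t) with hPdef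
  have hzJ : ∀ t, (W t).Nonempty → z t ≤ (J.filter (fun j => P t j)).card := by
    intro t hne
    refine le_trans (hzbound t hne) ?_
    have hLW := (W t).min'_mem hne
    have hMW := (W t).max'_mem hne
    have hL := Finset.mem_filter.1 hLW
    have hM := Finset.mem_filter.1 hMW
    have hsubset : Finset.Ico ((W t).min' hne) ((W t).max' hne) ⊆ J.filter (fun j => P t j) := by
      intro j hj
      rw [Finset.mem_Ico] at hj
      refine Finset.mem_filter.2 ⟨Finset.mem_Ico.2 ⟨?_, ?_⟩,
        ⟨(W t).min' hne, hL.1, hj.1, hL.2.2⟩, ⟨(W t).max' hne, hM.1, hj.2, hM.2.1⟩⟩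
      · exact le_trans (hSv _ hL.1) hj.1
      · exact lt_of_lt_of_le hj.2 (hSm _ hM.1)
    calc (W t).max' hne - (W t).min' hne
        = (Finset.Ico ((W t).min' hne) ((W t).max' hne)).card := (Nat.card_Ico _ _).symm
      _ ≤ _ := Finset.card_le_card hsubset
  set Ine := I.filter (fun t => (W t).Nonempty) with hIne
  have hcount : ∀ j ∈ J, (Ine.filter (fun t => P t j)).card ≤ r := by
    intro j hjJ
    rw [hJ, Finset.mem_Ico] at hjJ
    have hle : (q.support.filter (· ≤ j)).Nonempty := ⟨v, Finset.mem_filter.2 ⟨hvS, hjJ.1⟩⟩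
    have hgt : (q.support.filter (j < ·)).Nonempty := ⟨m, Finset.mem_filter.2 ⟨hmS, hjJ.2⟩⟩
    set π := (q.support.filter (· ≤ j)).max' hle with hπ
    set σ := (q.support.filter (j < ·)).min' hgt with hσ
    have hπj : π ≤ j := (Finset.mem_filter.1 ((q.support.filter (· ≤ j)).max'_mem hle)).2
    have hσj : j < σ := (Finset.mem_filter.1 ((q.support.filter (j < ·)).min'_mem hgt)).2
    have hsub2 : Ine.filter (fun t => P t j) ⊆ Finset.Icc σ (π + r) := by
      intro t ht
      obtain ⟨-, ⟨s, hsS, hsj, hts⟩, ⟨s', hs'S, hjs', hs't⟩⟩ := Finset.mem_filter.1 ht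
      refine Finset.mem_Icc.2 ⟨?_, ?_⟩
      · exact le_trans ((q.support.filter (j < ·)).min'_le s' (Finset.mem_filter.2 ⟨hs'S, hjs'⟩)) hs't
      · exact le_trans hts (by
          have := (q.support.filter (· ≤ j)).le_max' s (Finset.mem_filter.2 ⟨hsS, hsj⟩)
          omega)
    calc (Ine.filter (fun t => P t j)).card ≤ (Finset.Icc σ (π + r)).card :=
          Finset.card_le_card hsub2
      _ = π + r + 1 - σ := Nat.card_Icc _ _
      _ ≤ r := by omega
  have hcount0 : ∀ j, W (j + r + 1) = ∅ → (Ine.filter (fun t => P t j)).card = 0 := by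
    intro j hWe
    rw [Finset.card_eq_zero, Finset.filter_eq_empty_iff]
    intro t ht hPt
    obtain ⟨⟨s, hsS, hsj, hts⟩, ⟨s', hs'S, hjs', hs't⟩⟩ := hPt
    have hmem : s' ∈ W (j + r + 1) := by
      rw [hWdef]
      exact Finset.mem_filter.2 ⟨hs'S, by omega, by omega⟩
    rw [hWe] at hmem
    exact absurd hmem (Finset.notMem_empty _)
  set Ie := I.filter (fun t => ¬(W t).Nonempty) with hIe
  have hinj : Ie.card ≤ (J.filter (fun j => W (j + r + 1) = ∅)).card := by
    refine Finset.card_le_card_of_injOn (fun t => t - r - 1) ?_ ?_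
    · intro t ht
      dsimp only
      obtain ⟨htI, htW⟩ := Finset.mem_filter.1 ht
      rw [hI, Finset.mem_Icc] at htI
      rw [Finset.not_nonempty_iff_eq_empty] at htW
      have htv : v + r + 1 ≤ t := by
        by_contra hcon
        have : v ∈ W t := by
          rw [hWdef]
          exact Finset.mem_filter.2 ⟨hvS, by omega, by omega⟩
        rw [htW] at this
        exact absurd this (Finset.notMem_empty _)
      have htm : t < m := by
        by_contra hcon
        have : m ∈ W t := by
          rw [hWdef]
          exact Finset.mem_filter.2 ⟨hmS, by omega, by omega⟩
        rw [htW] at this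
        exact absurd this (Finset.notMem_empty _)
      refine Finset.mem_filter.2 ⟨Finset.mem_Ico.2 ⟨by omega, by omega⟩, ?_⟩
      rw [show t - r - 1 + r + 1 = t by omega]
      exact htW
    · intro t1 h1 t2 h2 h12
      dsimp only at h12
      obtain ⟨h1I, h1W⟩ := Finset.mem_filter.1 h1
      obtain ⟨h2I, h2W⟩ := Finset.mem_filter.1 h2
      rw [hI, Finset.mem_Icc] at h1I h2I
      have e1 : v + r + 1 ≤ t1 := by
        by_contra hcon
        rw [Finset.not_nonempty_iff_eq_empty] at h1W
        have : v ∈ W t1 := by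
          rw [hWdef]; exact Finset.mem_filter.2 ⟨hvS, by omega, by omega⟩
        rw [h1W] at this; exact absurd this (Finset.notMem_empty _)
      have e2 : v + r + 1 ≤ t2 := by
        by_contra hcon
        rw [Finset.not_nonempty_iff_eq_empty] at h2W
        have : v ∈ W t2 := by
          rw [hWdef]; exact Finset.mem_filter.2 ⟨hvS, by omega, by omega⟩
        rw [h2W] at this; exact absurd this (Finset.notMem_empty _)
      omega
  -- sum of z over I
  have h6 : (∑ t ∈ I, z t) ≤ n * (m - v) := by
    have hsplit : (∑ t ∈ I, z t) = (∑ t ∈ Ine, z t) + (∑ t ∈ Ie, z t) :=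
      (Finset.sum_filter_add_sum_filter_not I (fun t => (W t).Nonempty) z).symm
    have hA : (∑ t ∈ Ine, z t) ≤ ∑ j ∈ J, (Ine.filter (fun t => P t j)).card := by
      calc (∑ t ∈ Ine, z t) ≤ ∑ t ∈ Ine, (J.filter (fun j => P t j)).card :=
            Finset.sum_le_sum fun t ht => hzJ t (Finset.mem_filter.1 ht).2
        _ = ∑ t ∈ Ine, ∑ j ∈ J, (if P t j then 1 else 0) := by
            refine Finset.sum_congr rfl fun t _ => ?_
            rw [Finset.card_filter]
        _ = ∑ j ∈ J, ∑ t ∈ Ine, (if P t j then 1 else 0) := Finset.sum_comm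
        _ = ∑ j ∈ J, (Ine.filter (fun t => P t j)).card := by
            refine Finset.sum_congr rfl fun j _ => ?_
            rw [Finset.card_filter]
    have hB : (∑ t ∈ Ie, z t) ≤ n * Ie.card := by
      calc (∑ t ∈ Ie, z t) ≤ ∑ t ∈ Ie, n := Finset.sum_le_sum fun t _ => by
            rw [hz]
            calc (Finset.univ.filter fun k : Fin n => (q * G k).coeff t = 0).card
                ≤ (Finset.univ : Finset (Fin n)).card := Finset.card_filter_le _ _
              _ = n := by simp
        _ = n * Ie.card := by rw [Finset.sum_const, smul_eq_mul, mul_comm]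
    have hC : ∑ j ∈ J, (Ine.filter (fun t => P t j)).card + n *
        (J.filter (fun j => W (j + r + 1) = ∅)).card ≤ n * J.card := by
      have step : ∑ j ∈ J, (Ine.filter (fun t => P t j)).card + n *
          (J.filter (fun j => W (j + r + 1) = ∅)).card
          = ∑ j ∈ J, ((Ine.filter (fun t => P t j)).card +
              (if W (j + r + 1) = ∅ then n else 0)) := by
        rw [Finset.sum_add_distrib]
        congr 1
        rw [← Finset.sum_filter, Finset.sum_const, smul_eq_mul, mul_comm]
      rw [step]
      calc ∑ j ∈ J, ((Ine.filter (fun t => P t j)).card +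
              (if W (j + r + 1) = ∅ then n else 0))
          ≤ ∑ j ∈ J, n := by
            refine Finset.sum_le_sum fun j hj => ?_
            by_cases he : W (j + r + 1) = ∅
            · rw [hcount0 j he, if_pos he]; omega
            · rw [if_neg he]
              have := hcount j hj
              omega
        _ = n * J.card := by rw [Finset.sum_const, smul_eq_mul, mul_comm]
    have hJcard : J.card = m - v := Nat.card_Ico _ _
    have hmul1 : n * J.card = n * (m - v) := by rw [hJcard]
    have hmul2 : n * Ie.card ≤ n * (J.filter (fun j => W (j + r + 1) = ∅)).card :=
      Nat.mul_le_mul_left n hinj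
    omega
  -- hamming norm identity
  have hNsum : ∀ t, hammingNorm (fun k : Fin n => (q * G k).coeff t) + z t = n := by
    intro t
    have h7 : hammingNorm (fun k : Fin n => (q * G k).coeff t)
        = (Finset.univ.filter fun k : Fin n => ¬((q * G k).coeff t = 0)).card := by
      rw [hammingNorm]
    rw [h7, hz]
    rw [Nat.add_comm]
    rw [Finset.card_filter_add_card_filter_not (fun k : Fin n => (q * G k).coeff t = 0)]
    exact Finset.card_fin n
  -- final assembly
  have hIcard : I.card = m + r + 1 - v := Nat.card_Icc _ _
  have h5 : (∑ t ∈ I, hammingNorm (fun k : Fin n => (q * G k).coeff t)) + (∑ t ∈ I, z t)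
      = n * (m + r + 1 - v) := by
    rw [← Finset.sum_add_distrib]
    rw [Finset.sum_congr rfl (fun t _ => hNsum t)]
    rw [Finset.sum_const, smul_eq_mul, hIcard, mul_comm]
  have hmain : (∑ t ∈ I, hammingNorm (fun k : Fin n => (q * G k).coeff t))
      ≤ polyWeight (fun k => q * G k) := by
    rw [polyWeight, hsup]
    refine Finset.sum_le_sum_of_subset ?_
    intro t ht
    rw [hI, Finset.mem_Icc] at ht
    rw [Finset.mem_range]
    omega
  have hsplitmul : n * (m + r + 1 - v) = n * (r + 1) + n * (m - v) := by
    rw [← Nat.mul_add]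
    congr 1
    omega
  omega

end W

theorem Gluesing_Langfeld_codes_MDS
    {F : Type*} [Field F] [Fintype F] [DecidableEq F]
    (n r : ℕ) (hrn : r < n)
    -- a ∈ F_q^× has multiplicative order at least n
    (a : F) (ha : a ≠ 0) (horder : n ≤ orderOf a)
    -- G(z) = Σ_{i=0}^{r} z^i · ( 1, a^i, a^{2i}, …, a^{(n−1)i} )
    (Gpoly : Fin n → Polynomial F)
    (hG : ∀ k : Fin n, Gpoly k =
      ∑ i ∈ Finset.range (r + 1), Polynomial.C (a ^ ((k : ℕ) * i)) * Polynomial.X ^ i) :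
    -- G(z) is a generator matrix (rank 1) of C = F_q(z)·G(z) …
    Gpoly ≠ 0 ∧
    -- … which is basic: F_q[z]^n / (F_q[z]-row span of G) is free
    Module.Free (Polynomial F)
      ((Fin n → Polynomial F) ⧸ Submodule.span (Polynomial F) {Gpoly}) ∧
    -- C has degree r (the max degree of the 1×1 minors of the basic matrix G)
    (Finset.univ.sup fun i => (Gpoly i).natDegree) = r ∧
    -- the free distance of C equals n(r+1), the generalized Singleton bound for (n,1,r):
    -- hence C is an MDS convolutional code
    IsLeast { w : ℕ | ∃ x : Fin n → Polynomial F,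
        liftVec x ∈ Submodule.span (RatFunc F) {liftVec Gpoly} ∧ x ≠ 0 ∧ polyWeight x = w }
      (n * (r + 1)) := by
  classical
  have hn : 0 < n := by omega
  have hGc : ∀ (k : Fin n) (i : ℕ), (Gpoly k).coeff i = if i ≤ r then a ^ ((k : ℕ) * i) else 0 :=
    fun k i => by rw [hG k]; exact aux_coeff r _ i
  have hGdeg : ∀ k, (Gpoly k).natDegree = r := fun k => by
    rw [hG k]; exact aux_natDegree r _ (pow_ne_zero _ ha)
  have hGne : ∀ k, Gpoly k ≠ 0 := by
    intro k h
    have := hGc k 0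
    rw [h] at this
    simp at this
  have hGne0 : Gpoly ≠ 0 := fun h => hGne ⟨0, hn⟩ (congrFun h ⟨0, hn⟩)
  have hsupG : (Finset.univ.sup fun i => (Gpoly i).natDegree) = r := by
    apply le_antisymm
    · exact Finset.sup_le fun k _ => le_of_eq (hGdeg k)
    · rw [← hGdeg ⟨0, hn⟩]
      exact Finset.le_sup (f := fun k : Fin n => (Gpoly k).natDegree) (Finset.mem_univ (⟨0, hn⟩ : Fin n))
  -- Bezout data
  obtain ⟨c, hc⟩ := aux_bezout n r hrn a horder
  have hBez : (∑ k : Fin n, Polynomial.C (c k) * Gpoly k) = 1 := aux_bezout_poly c hc Gpoly hG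
  -- the Bezout functional
  set φ : (Fin n → Polynomial F) →ₗ[Polynomial F] Polynomial F :=
    { toFun := fun x => ∑ k : Fin n, Polynomial.C (c k) * x k
      map_add' := fun x y => by
        simp only [Pi.add_apply, mul_add]
        rw [Finset.sum_add_distrib]
      map_smul' := fun p x => by
        simp only [Pi.smul_apply, smul_eq_mul, RingHom.id_apply]
        rw [Finset.mul_sum]
        exact Finset.sum_congr rfl fun k _ => by ring } with hφdef
  have hφG : φ Gpoly = 1 := hBez
  refine ⟨hGne0, ?_, hsupG, ?_, ?_⟩
  · -- freeness of the quotient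
    have hNZ : NoZeroSMulDivisors (Polynomial F)
        ((Fin n → Polynomial F) ⧸ Submodule.span (Polynomial F) {Gpoly}) := by
      constructor
      intro p x hpx
      by_cases hp : p = 0
      · exact Or.inl hp
      refine Or.inr ?_
      obtain ⟨y, rfl⟩ := Submodule.Quotient.mk_surjective _ x
      rw [← Submodule.Quotient.mk_smul, Submodule.Quotient.mk_eq_zero] at hpx
      rw [Submodule.Quotient.mk_eq_zero]
      obtain ⟨s, hs⟩ := Submodule.mem_span_singleton.1 hpx
      have hφs : s = p * φ y := by
        have h1 := congrArg φ hs
        rw [map_smul, map_smul, hφG, smul_eq_mul, mul_one, smul_eq_mul] at h1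
        exact h1
      have h2 : p • y = p • ((φ y) • Gpoly) := by
        rw [← hs, hφs, smul_smul]
      have h3 : y = (φ y) • Gpoly := by
        funext k
        have h4 := congrFun h2 k
        simp only [Pi.smul_apply, smul_eq_mul] at h4 ⊢
        exact mul_left_cancel₀ hp h4
      exact Submodule.mem_span_singleton.2 ⟨φ y, h3.symm⟩
    exact Module.free_of_finite_type_torsion_free'
  · -- membership: Gpoly itself has weight n(r+1)
    refine ⟨Gpoly, Submodule.mem_span_singleton_self _, hGne0, ?_⟩
    rw [polyWeight, hsupG]
    have hall : ∀ t ∈ Finset.range (r + 1),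
        hammingNorm (fun k : Fin n => (Gpoly k).coeff t) = n := by
      intro t ht
      rw [Finset.mem_range] at ht
      have hne : ∀ k : Fin n, (Gpoly k).coeff t ≠ 0 := fun k => by
        rw [hGc k t, if_pos (by omega)]
        exact pow_ne_zero _ ha
      rw [hammingNorm]
      rw [Finset.filter_true_of_mem (fun k _ => hne k)]
      simp
    rw [Finset.sum_congr rfl hall, Finset.sum_const, Finset.card_range, smul_eq_mul, mul_comm]
  · -- lower bound
    rintro w ⟨x, hmem, hxne, rfl⟩
    obtain ⟨f, hf⟩ := Submodule.mem_span_singleton.1 hmem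
    set q : Polynomial F := ∑ k : Fin n, Polynomial.C (c k) * x k with hqdef
    have hfk : ∀ k : Fin n, f * algebraMap (Polynomial F) (RatFunc F) (Gpoly k)
        = algebraMap (Polynomial F) (RatFunc F) (x k) := by
      intro k
      have h0 := congrFun hf k
      rw [Pi.smul_apply, smul_eq_mul] at h0
      exact h0
    have halg : algebraMap (Polynomial F) (RatFunc F) q = f := by
      rw [hqdef, map_sum]
      have h1 : ∀ k : Fin n, algebraMap (Polynomial F) (RatFunc F) (Polynomial.C (c k) * x k)
          = f * algebraMap (Polynomial F) (RatFunc F) (Polynomial.C (c k) * Gpoly k) := by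
        intro k
        rw [map_mul, map_mul, ← hfk k]
        ring
      rw [Finset.sum_congr rfl fun k _ => h1 k, ← Finset.mul_sum, ← map_sum, hBez, map_one,
        mul_one]
    have hxk : ∀ k : Fin n, x k = q * Gpoly k := by
      intro k
      apply RatFunc.algebraMap_injective F
      rw [map_mul, halg, hfk k]
    have hqne : q ≠ 0 := by
      intro h
      apply hxne
      funext k
      rw [hxk k, h, zero_mul]
      rfl
    have hxeq : x = fun k => q * Gpoly k := funext hxk
    rw [hxeq]
    exact aux_weight n r hrn a ha horder Gpoly hGc q hqne
end

section
/- Let F_q be a finite field and let α_1, …, α_n ∈ F_q(z) be pairwise distinct elements of the form α_i = a_i z + b_i with a_i ∈ F_q^× and b_i ∈ F_q, and let s, r be integers with 0 ≤ s ≤ r < n. Then the (r−s+1)×n matrix G over F_q(z) with entries G_{m,i} = α_i^m (for s ≤ m ≤ r, 1 ≤ i ≤ n) has rank r−s+1; consequently the convolutional Goppa code C(D,G) ⊆ F_q(z)^n defined as the F_q(z)-row span of this matrix is a convolutional code of length n and dimension r−s+1. -/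
set_option synthInstance.maxHeartbeats 400000
set_option maxHeartbeats 800000


open Polynomial Finset

theorem CGC_projective_line_rank
    {F : Type*} [Field F] [Fintype F]
    (n s r : ℕ) (hsr : s ≤ r) (hrn : r < n)
    (a : Fin n → F) (ha : ∀ i, a i ≠ 0) (b : Fin n → F)
    -- α_i = a_i z + b_i, pairwise distinct
    (α : Fin n → RatFunc F)
    (hα : ∀ i, α i = RatFunc.C (a i) * RatFunc.X + RatFunc.C (b i))
    (hdist : Function.Injective α) :
    -- the matrix (α_i^m)_{s ≤ m ≤ r, 1 ≤ i ≤ n} has rank r−s+1 …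
    LinearIndependent (RatFunc F)
      (fun m : Fin (r - s + 1) => fun i : Fin n => α i ^ (s + (m : ℕ))) ∧
    -- … so the convolutional Goppa code C(D,G), its F_q(z)-row span,
    -- is a convolutional code of length n and dimension r−s+1
    Module.finrank (RatFunc F)
      (Submodule.span (RatFunc F)
        (Set.range fun m : Fin (r - s + 1) => fun i : Fin n => α i ^ (s + (m : ℕ)))) =
      r - s + 1 := by
  have hli : LinearIndependent (RatFunc F)
      (fun m : Fin (r - s + 1) => fun i : Fin n => α i ^ (s + (m : ℕ))) := by
    rw [Fintype.linearIndependent_iff]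
    intro g hg m0
    -- build the polynomial p = ∑ C (g m) * X^(s+m)
    set p : Polynomial (RatFunc F) :=
      ∑ m : Fin (r - s + 1), Polynomial.C (g m) * Polynomial.X ^ (s + (m : ℕ)) with hp
    have heval : ∀ i, p.eval (α i) = 0 := by
      intro i
      have := congrFun hg i
      simp only [Finset.sum_apply, Pi.smul_apply, smul_eq_mul, Pi.zero_apply] at this
      simpa [hp, Polynomial.eval_finset_sum] using this
    have hdeg : p.natDegree < n := by
      have : p.natDegree ≤ r := by
        apply Polynomial.natDegree_sum_le_of_forall_le
        intro m _
        refine le_trans (Polynomial.natDegree_C_mul_le _ _) ?_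
        rw [Polynomial.natDegree_X_pow]
        omega
      omega
    have hp0 : p = 0 := by
      refine Polynomial.eq_zero_of_natDegree_lt_card_of_eval_eq_zero p hdist heval ?_
      simpa using hdeg
    have := congrArg (fun q => Polynomial.coeff q (s + (m0 : ℕ))) hp0
    simp only [hp, Polynomial.finset_sum_coeff, Polynomial.coeff_C_mul,
      Polynomial.coeff_X_pow, Polynomial.coeff_zero, mul_ite, mul_one, mul_zero] at this
    simpa [add_right_inj, Fin.val_inj, Finset.sum_ite_eq] using this
  refine ⟨hli, ?_⟩
  rw [finrank_span_eq_card hli, Fintype.card_fin]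
end

section
/- Let F_q be a finite field and let α_1, …, α_n ∈ F_q(z) be pairwise distinct elements of the form α_i = a_i z + b_i with a_i ∈ F_q^× and b_i ∈ F_q, and let s, r be integers with 0 ≤ s ≤ r < n. For 1 ≤ j ≤ n set h_j = 1 / ( α_j^s · Π_{i≠j} (α_j − α_i) ) ∈ F_q(z). Let G be the (r−s+1)×n matrix with entries α_i^m (s ≤ m ≤ r) and let H be the (n−r+s−1)×n matrix with entries h_i α_i^l (0 ≤ l ≤ n−r+s−2). Then G·Hᵀ = 0, i.e., Σ_{j=1}^{n} α_j^{m} h_j α_j^{l} = 0 for all s ≤ m ≤ r and 0 ≤ l ≤ n−r+s−2; moreover H has rank n−(r−s+1) and the F_q(z)-row span of H equals the dual code C(D,G)^⊥ = { y ∈ F_q(z)^n : Σ_{i=1}^n x_i y_i = 0 for all x in the row span of G }. In other words, H is a control (parity-check) matrix of the convolutional Goppa code C(D,G). -/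
set_option maxHeartbeats 1000000
set_option synthInstance.maxHeartbeats 400000
open Polynomial Finset Matrix

section Aux
variable {K : Type*} [Field K] {n : ℕ}

private lemma lagA (x : Fin n → K) (hx : Function.Injective x)
    (k : ℕ) (hk : k + 2 ≤ n) :
    ∑ j, x j ^ k * (∏ i ∈ Finset.univ.erase j, (x j - x i))⁻¹ = 0 := by
  have hinj : Set.InjOn x ↑(univ : Finset (Fin n)) := hx.injOn
  have hcard : #(univ : Finset (Fin n)) = n := by simp
  have hdeg : (X ^ k : K[X]).degree < #(univ : Finset (Fin n)) := by
    rw [degree_X_pow, hcard]; exact_mod_cast by omega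
  have hinterp := Lagrange.eq_interpolate hinj hdeg
  have hco := congrArg (fun p => Polynomial.coeff p (n - 1)) hinterp
  simp only [Lagrange.interpolate_apply, finset_sum_coeff, coeff_C_mul, coeff_X_pow] at hco
  rw [if_neg (by omega)] at hco
  have hbc : ∀ j : Fin n, (Lagrange.basis univ x j).coeff (n - 1)
      = (∏ i ∈ univ.erase j, (x j - x i))⁻¹ := by
    intro j
    have hnd : (Lagrange.basis univ x j).natDegree = n - 1 := by
      apply natDegree_eq_of_degree_eq_some
      rw [Lagrange.degree_basis hinj (mem_univ j), hcard]
    rw [← hnd, coeff_natDegree, Lagrange.basis, leadingCoeff_prod, ← Finset.prod_inv_distrib]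
    refine Finset.prod_congr rfl fun i hi => ?_
    rw [Lagrange.basisDivisor, leadingCoeff_mul, leadingCoeff_C, leadingCoeff_X_sub_C, mul_one]
  simp only [hbc, eval_pow, eval_X] at hco
  exact hco.symm

private lemma vliW {k : ℕ} (hkn : k ≤ n)
    (x : Fin n → K) (hx : Function.Injective x)
    (w : Fin n → K) (hw : ∀ i, w i ≠ 0) :
    LinearIndependent K (fun l : Fin k => fun i : Fin n => w i * x i ^ (l : ℕ)) := by
  rw [Fintype.linearIndependent_iff]
  intro c hc l
  set p : K[X] := ∑ l : Fin k, C (c l) * X ^ (l : ℕ) with hp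
  have hroot : ∀ i, p.eval (x i) = 0 := by
    intro i
    have hi := congrFun hc i
    simp only [Finset.sum_apply, Pi.smul_apply, smul_eq_mul, Pi.zero_apply] at hi
    have : p.eval (x i) * w i = 0 := by
      rw [hp]; simp only [eval_finset_sum, eval_mul, eval_C, eval_pow, eval_X]
      rw [Finset.sum_mul, ← hi]
      exact Finset.sum_congr rfl fun j _ => by ring
    exact (mul_eq_zero.mp this).resolve_right (hw i)
  have hdeg : p.natDegree < Fintype.card (Fin n) := by
    rw [Fintype.card_fin]
    have hk0 : k ≠ 0 := fun h => (h ▸ l).elim0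
    refine lt_of_le_of_lt (natDegree_sum_le_of_forall_le _ _ (fun j _ =>
      le_trans (natDegree_C_mul_le _ _)
        (by rw [natDegree_X_pow]; exact Nat.le_sub_one_of_lt j.2) : ∀ j ∈ univ,
        (C (c j) * X ^ (j:ℕ)).natDegree ≤ k - 1)) (by omega)
  have hp0 : p = 0 := p.eq_zero_of_natDegree_lt_card_of_eval_eq_zero hx hroot hdeg
  have := congrArg (fun q => Polynomial.coeff q (l : ℕ)) hp0
  simp only [hp, finset_sum_coeff, coeff_C_mul, coeff_X_pow, coeff_zero] at this
  rwa [Finset.sum_eq_single l (fun j _ hj => by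
      rw [if_neg (fun hc' => hj (Fin.val_injective hc').symm), mul_zero])
    (fun hl => absurd (Finset.mem_univ l) hl), if_pos rfl, mul_one] at this

end Aux

theorem CGC_projective_line_parity_check
    {F : Type*} [Field F] [Fintype F]
    (n s r : ℕ) (hsr : s ≤ r) (hrn : r < n)
    (a : Fin n → F) (ha : ∀ i, a i ≠ 0) (b : Fin n → F)
    -- α_i = a_i z + b_i, pairwise distinct
    (α : Fin n → RatFunc F)
    (hα : ∀ i, α i = RatFunc.C (a i) * RatFunc.X + RatFunc.C (b i))
    (hdist : Function.Injective α)
    -- h_j = 1 / ( α_j^s · Π_{i≠j} (α_j − α_i) )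
    (h : Fin n → RatFunc F)
    (hh : ∀ j, h j = (α j ^ s * ∏ i ∈ Finset.univ.erase j, (α j - α i))⁻¹) :
    -- G·Hᵀ = 0 : Σ_j α_j^m · h_j α_j^l = 0 for s ≤ m ≤ r and 0 ≤ l ≤ n−r+s−2
    (∀ m, s ≤ m → m ≤ r → ∀ l : ℕ, l + r + 2 ≤ n + s →
      ∑ j, α j ^ m * (h j * α j ^ l) = 0) ∧
    -- H has rank n−(r−s+1)
    LinearIndependent (RatFunc F)
      (fun l : Fin (n - (r - s + 1)) => fun i : Fin n => h i * α i ^ (l : ℕ)) ∧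
    -- the F_q(z)-row span of H is the dual code C(D,G)^⊥:
    -- H is a control (parity-check) matrix of the convolutional Goppa code C(D,G)
    (Submodule.span (RatFunc F)
        (Set.range fun l : Fin (n - (r - s + 1)) => fun i : Fin n => h i * α i ^ (l : ℕ)) :
      Set (Fin n → RatFunc F)) =
      { y : Fin n → RatFunc F |
        ∀ x ∈ Submodule.span (RatFunc F)
          (Set.range fun m : Fin (r - s + 1) => fun i : Fin n => α i ^ (s + (m : ℕ))),
        ∑ i, x i * y i = 0 } := by
  classical
  -- α i ≠ 0
  have hα0 : ∀ i, α i ≠ 0 := by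
    intro i
    have hpoly : (Polynomial.C (a i) * Polynomial.X + Polynomial.C (b i) : F[X]) ≠ 0 := by
      intro hc
      apply ha i
      have := congrArg (fun p => Polynomial.coeff p 1) hc
      simpa using this
    rw [hα i, ← RatFunc.algebraMap_C (a i), ← RatFunc.algebraMap_X, ← RatFunc.algebraMap_C (b i),
      ← _root_.map_mul, ← _root_.map_add]
    exact (map_ne_zero_iff _ (RatFunc.algebraMap_injective F)).mpr hpoly
  have hP : ∀ j, (∏ i ∈ univ.erase j, (α j - α i)) ≠ 0 := fun j =>
    Finset.prod_ne_zero_iff.mpr fun i hi =>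
      sub_ne_zero.mpr fun hc => (Finset.mem_erase.mp hi).1 (hdist hc).symm
  have hh0 : ∀ j, h j ≠ 0 := fun j => by
    rw [hh j]; exact inv_ne_zero (mul_ne_zero (pow_ne_zero _ (hα0 j)) (hP j))
  -- Part 1
  have part1 : ∀ m, s ≤ m → m ≤ r → ∀ l : ℕ, l + r + 2 ≤ n + s →
      ∑ j, α j ^ m * (h j * α j ^ l) = 0 := by
    intro m hsm hmr l hl
    have key : ∀ j, α j ^ m * (h j * α j ^ l)
        = α j ^ (m - s + l) * (∏ i ∈ univ.erase j, (α j - α i))⁻¹ := by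
      intro j
      have h1 : α j ^ s ≠ 0 := pow_ne_zero _ (hα0 j)
      have h2 := hP j
      rw [hh j, mul_inv, show m = s + (m - s) from by omega, pow_add, pow_add]
      field_simp
      rw [Nat.add_sub_cancel_left]; ring
    rw [Finset.sum_congr rfl (fun j _ => key j)]
    exact lagA α hdist _ (by omega)
  -- Part 2
  have part2 : LinearIndependent (RatFunc F)
      (fun l : Fin (n - (r - s + 1)) => fun i : Fin n => h i * α i ^ (l : ℕ)) :=
    vliW (by omega) α hdist h hh0
  refine ⟨part1, part2, ?_⟩
  -- Part 3
  have hGli : LinearIndependent (RatFunc F) (fun m : Fin (r - s + 1) => fun i : Fin n =>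
      α i ^ (s + (m : ℕ))) := by
    have := vliW (show r - s + 1 ≤ n by omega) α hdist (fun i => α i ^ s)
      (fun i => pow_ne_zero _ (hα0 i))
    simp_rw [← pow_add] at this
    exact this
  set M : Matrix (Fin (r - s + 1)) (Fin n) (RatFunc F) :=
    Matrix.of (fun m i => α i ^ (s + (m : ℕ))) with hM
  set f : (Fin n → (RatFunc F)) →ₗ[(RatFunc F)] (Fin (r - s + 1) → (RatFunc F)) := M.mulVecLin with hf
  -- span H = ker f
  have hle : Submodule.span (RatFunc F)
      (Set.range fun l : Fin (n - (r - s + 1)) => fun i : Fin n => h i * α i ^ (l : ℕ))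
      ≤ LinearMap.ker f := by
    rw [Submodule.span_le]
    rintro _ ⟨l, rfl⟩
    simp only [SetLike.mem_coe, LinearMap.mem_ker]
    funext m
    have := part1 (s + (m : ℕ)) (Nat.le_add_right _ _) (by omega) (l : ℕ) (by omega)
    simpa [hf, hM, Matrix.mulVecLin_apply, Matrix.mulVec, dotProduct] using this
  have hginj : Function.Injective Mᵀ.mulVecLin := by
    rw [← LinearMap.ker_eq_bot]
    rw [Submodule.eq_bot_iff]
    intro c hc
    rw [LinearMap.mem_ker] at hc
    have hc' : ∑ m, c m • (fun i : Fin n => α i ^ (s + (m : ℕ))) = 0 := by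
      funext i
      have := congrFun hc i
      simpa [Matrix.mulVecLin_apply, Matrix.mulVec, Matrix.vecMul, dotProduct, hM,
        mul_comm] using this
    funext m
    exact Fintype.linearIndependent_iff.mp hGli c hc' m
  have hrange : Module.finrank (RatFunc F) (LinearMap.range f) = r - s + 1 := by
    have e1 : Module.finrank (RatFunc F) (LinearMap.range Mᵀ.mulVecLin) = r - s + 1 := by
      rw [LinearMap.finrank_range_of_inj hginj, Module.finrank_fintype_fun_eq_card,
        Fintype.card_fin]
    calc Module.finrank (RatFunc F) (LinearMap.range f) = M.rank := rfl
      _ = Mᵀ.rank := (Matrix.rank_transpose M).symm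
      _ = Module.finrank (RatFunc F) (LinearMap.range Mᵀ.mulVecLin) := rfl
      _ = r - s + 1 := e1
  have hkerrank : Module.finrank (RatFunc F) (LinearMap.ker f) = n - (r - s + 1) := by
    have := LinearMap.finrank_range_add_finrank_ker f
    rw [Module.finrank_fintype_fun_eq_card, Fintype.card_fin, hrange] at this
    omega
  have hspan_eq : Submodule.span (RatFunc F)
      (Set.range fun l : Fin (n - (r - s + 1)) => fun i : Fin n => h i * α i ^ (l : ℕ))
      = LinearMap.ker f := by
    apply Submodule.eq_of_le_of_finrank_le hle
    rw [hkerrank, finrank_span_eq_card part2, Fintype.card_fin]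
  rw [hspan_eq]
  ext y
  simp only [SetLike.mem_coe, LinearMap.mem_ker, Set.mem_setOf_eq]
  constructor
  · intro hy x hx
    induction hx using Submodule.span_induction with
    | mem x hx =>
      obtain ⟨m, rfl⟩ := hx
      have := congrFun hy m
      simpa [hf, hM, Matrix.mulVecLin_apply, Matrix.mulVec, dotProduct] using this
    | zero => simp
    | add x z hx hz ihx ihz =>
      simp only [Pi.add_apply, add_mul, Finset.sum_add_distrib, ihx, ihz, add_zero]
    | smul t x hx ih =>
      simp only [Pi.smul_apply, smul_eq_mul, mul_assoc, ← Finset.mul_sum, ih, mul_zero]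
  · intro hy
    funext m
    have := hy (fun i => α i ^ (s + (m : ℕ)))
      (Submodule.subset_span (Set.mem_range_self m))
    simpa [hf, hM, Matrix.mulVecLin_apply, Matrix.mulVec, dotProduct] using this
end

section
/- Let F_q be a finite field and let C ⊆ F_q(z)^n be a convolutional code of dimension k. (1) If G is a basic generator matrix of C and B ∈ GL(k, F_q[z]) is a unimodular matrix, then B·G is again a basic generator matrix of C. (2) If G and G' are any two basic generator matrices of C, then δ_G = δ_{G'}, where δ_G denotes the maximum of the degrees of the k×k minors of G. Hence the number δ_G is an invariant of the code C (its degree). -/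
open Polynomial Finset

set_option maxHeartbeats 1000000
set_option synthInstance.maxHeartbeats 400000

/-- `δ_G`: the maximum of the degrees of the k×k minors of a k×n polynomial matrix G. -/
noncomputable def maxMinorDeg {F : Type*} [Field F] {k n : ℕ}
    (G : Fin k → Fin n → Polynomial F) : ℕ :=
  Finset.univ.sup fun g : Fin k → Fin n => (((Matrix.of G).submatrix id g).det).natDegree

/-- Componentwise lift as a `Polynomial F`-linear map. -/
noncomputable def liftL (F : Type*) [Field F] (n : ℕ) :
    (Fin n → Polynomial F) →ₗ[Polynomial F] (Fin n → RatFunc F) :=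
  LinearMap.compLeft (Algebra.linearMap (Polynomial F) (RatFunc F)) (Fin n)

section Helpers

variable {F : Type*} [Field F] {n k : ℕ}

lemma range_liftVec (G : Fin k → Fin n → Polynomial F) :
    (Set.range fun i => liftVec (G i)) = (liftL F n) '' Set.range G := by
  rw [← Set.range_comp]; rfl

lemma liftL_injective : Function.Injective (liftL F n) := by
  intro x y h
  funext i
  exact IsFractionRing.injective (Polynomial F) (RatFunc F) (congrFun h i)

lemma span_lift_span (s : Set (Fin n → Polynomial F)) :
    Submodule.span (RatFunc F)
        ((liftL F n) '' (Submodule.span (Polynomial F) s : Submodule _ _)) =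
      Submodule.span (RatFunc F) ((liftL F n) '' s) := by
  apply le_antisymm
  · rw [Submodule.span_le]
    rintro _ ⟨x, hx, rfl⟩
    have hle : Submodule.span (Polynomial F) s ≤
        Submodule.comap (liftL F n)
          ((Submodule.span (RatFunc F) ((liftL F n) '' s)).restrictScalars (Polynomial F)) := by
      rw [Submodule.span_le]
      intro y hy
      exact Submodule.subset_span ⟨y, hy, rfl⟩
    exact hle hx
  · exact Submodule.span_mono (Set.image_mono Submodule.subset_span)

lemma row_smul (B : Matrix (Fin k) (Fin k) (Polynomial F)) (G : Fin k → Fin n → Polynomial F)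
    (i : Fin k) : (B * Matrix.of G) i = ∑ j, B i j • G j := by
  funext c
  simp [Matrix.mul_apply, Finset.sum_apply]

lemma sum_smul_mul (c : Fin k → Polynomial F) (B : Matrix (Fin k) (Fin k) (Polynomial F))
    (G : Fin k → Fin n → Polynomial F) :
    ∑ i, c i • (B * Matrix.of G) i = ∑ l, (∑ i, c i * B i l) • G l := by
  funext j
  simp only [Finset.sum_apply, Pi.smul_apply, smul_eq_mul, Matrix.mul_apply, Matrix.of_apply,
    Finset.mul_sum, Finset.sum_mul]
  rw [Finset.sum_comm]
  exact Finset.sum_congr rfl fun l _ => Finset.sum_congr rfl fun i _ => by ring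

lemma rowspan_mul_le (B : Matrix (Fin k) (Fin k) (Polynomial F))
    (G : Fin k → Fin n → Polynomial F) :
    Submodule.span (Polynomial F) (Set.range fun i => (B * Matrix.of G) i) ≤
      Submodule.span (Polynomial F) (Set.range G) := by
  rw [Submodule.span_le]
  rintro _ ⟨i, rfl⟩
  dsimp only
  rw [SetLike.mem_coe, row_smul]
  exact Submodule.sum_smul_mem _ _ fun j _ => Submodule.subset_span (Set.mem_range_self j)

lemma rowspan_mul_eq (B : Matrix (Fin k) (Fin k) (Polynomial F)) (hB : IsUnit B.det)
    (G : Fin k → Fin n → Polynomial F) :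
    Submodule.span (Polynomial F) (Set.range fun i => (B * Matrix.of G) i) =
      Submodule.span (Polynomial F) (Set.range G) := by
  refine le_antisymm (rowspan_mul_le B G) ?_
  have h := rowspan_mul_le (G := fun i => (B * Matrix.of G) i) B⁻¹
  have hmat : B⁻¹ * Matrix.of (fun i => (B * Matrix.of G) i) = Matrix.of G := by
    have : Matrix.of (fun i => (B * Matrix.of G) i) = B * Matrix.of G := rfl
    rw [this, Matrix.nonsing_inv_mul_cancel_left _ _ hB]
  rw [hmat] at h
  exact h

lemma li_mul {G : Fin k → Fin n → Polynomial F} (hG : LinearIndependent (Polynomial F) G)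
    (B : Matrix (Fin k) (Fin k) (Polynomial F)) (hB : IsUnit B.det) :
    LinearIndependent (Polynomial F) (fun i => (B * Matrix.of G) i) := by
  rw [Fintype.linearIndependent_iff] at hG ⊢
  intro c hc
  have h1 : ∀ l, (∑ i, c i * B i l) = 0 := by
    apply hG
    rw [← sum_smul_mul, hc]
  have h2 : Matrix.vecMul c B = 0 := by
    funext l
    simpa [Matrix.vecMul, dotProduct] using h1 l
  intro i
  have h3 : Matrix.vecMul (Matrix.vecMul c B) B⁻¹ = Matrix.vecMul (0 : Fin k → Polynomial F) B⁻¹ := by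
    rw [h2]
  rw [Matrix.vecMul_vecMul, Matrix.mul_nonsing_inv B hB, Matrix.vecMul_one,
    Matrix.zero_vecMul] at h3
  exact congrFun h3 i

lemma clear_denominators (G : Fin k → Fin n → Polynomial F) (x : Fin n → Polynomial F)
    (hx : liftL F n x ∈ Submodule.span (RatFunc F) ((liftL F n) '' Set.range G)) :
    ∃ c : Polynomial F, c ≠ 0 ∧ c • x ∈ Submodule.span (Polynomial F) (Set.range G) := by
  rw [← Set.range_comp, Submodule.mem_span_range_iff_exists_fun] at hx
  obtain ⟨r, hr⟩ := hx
  obtain ⟨b, hb⟩ := IsLocalization.exist_integer_multiples_of_finite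
    (nonZeroDivisors (Polynomial F)) r
  choose p hp using hb
  refine ⟨(b : Polynomial F), nonZeroDivisors.coe_ne_zero b, ?_⟩
  have key : liftL F n ((b : Polynomial F) • x) = liftL F n (∑ i, p i • G i) := by
    rw [map_smul, map_sum, ← hr, Finset.smul_sum]
    refine Finset.sum_congr rfl fun i _ => ?_
    simp only [Function.comp_apply]
    rw [map_smul]
    have : (b : Polynomial F) • (r i • liftL F n (G i)) =
        ((b : Polynomial F) • r i) • liftL F n (G i) := (smul_assoc _ _ _).symm
    rw [this, ← hp i, algebraMap_smul]
  have hx2 := liftL_injective key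
  rw [hx2]
  exact Submodule.sum_smul_mem _ _ fun i _ => Submodule.subset_span (Set.mem_range_self i)

lemma mem_of_smul_mem (G : Fin k → Fin n → Polynomial F)
    (hfree : Module.Free (Polynomial F)
      ((Fin n → Polynomial F) ⧸ Submodule.span (Polynomial F) (Set.range G)))
    {c : Polynomial F} (hc : c ≠ 0) {x : Fin n → Polynomial F}
    (h : c • x ∈ Submodule.span (Polynomial F) (Set.range G)) :
    x ∈ Submodule.span (Polynomial F) (Set.range G) := by
  haveI := hfree
  have h0 : c • (Submodule.Quotient.mk x :
      (Fin n → Polynomial F) ⧸ Submodule.span (Polynomial F) (Set.range G)) = 0 := by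
    rw [← Submodule.Quotient.mk_smul, Submodule.Quotient.mk_eq_zero]
    exact h
  rcases smul_eq_zero.mp h0 with h' | h'
  · exact absurd h' hc
  · rwa [Submodule.Quotient.mk_eq_zero] at h'

lemma rowModule_le {C : Submodule (RatFunc F) (Fin n → RatFunc F)}
    (G G' : Fin k → Fin n → Polynomial F)
    (hGspan : Submodule.span (RatFunc F) (Set.range fun i => liftVec (G i)) = C)
    (hG'span : Submodule.span (RatFunc F) (Set.range fun i => liftVec (G' i)) = C)
    (hfree' : Module.Free (Polynomial F)
      ((Fin n → Polynomial F) ⧸ Submodule.span (Polynomial F) (Set.range G'))) :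
    Submodule.span (Polynomial F) (Set.range G) ≤
      Submodule.span (Polynomial F) (Set.range G') := by
  intro x hx
  have hxC : liftL F n x ∈ Submodule.span (RatFunc F) ((liftL F n) '' Set.range G') := by
    rw [← range_liftVec, hG'span, ← hGspan, range_liftVec, ← span_lift_span]
    exact Submodule.subset_span ⟨x, hx, rfl⟩
  obtain ⟨c, hc, hcx⟩ := clear_denominators G' x hxC
  exact mem_of_smul_mem G' hfree' hc hcx

lemma maxMinorDeg_mul (B : Matrix (Fin k) (Fin k) (Polynomial F)) (hB : IsUnit B.det)
    (G : Fin k → Fin n → Polynomial F) :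
    maxMinorDeg (fun i => (B * Matrix.of G) i) = maxMinorDeg G := by
  obtain ⟨a, ha, hCa⟩ := Polynomial.isUnit_iff.mp hB
  unfold maxMinorDeg
  refine Finset.sup_congr rfl fun g _ => ?_
  have h0 : (Matrix.of fun i => (B * Matrix.of G) i) = B * Matrix.of G := rfl
  rw [h0, ← Matrix.submatrix_mul_equiv B (Matrix.of G) id (Equiv.refl (Fin k)) g]
  simp only [Equiv.coe_refl, Matrix.submatrix_id_id]
  rw [Matrix.det_mul, ← hCa, Polynomial.natDegree_C_mul ha.ne_zero]

end Helpers

theorem basic_matrices_unimodular_invariance_and_degree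
    {F : Type*} [Field F] [Fintype F]
    (n k : ℕ)
    (C : Submodule (RatFunc F) (Fin n → RatFunc F))
    (hC : Module.finrank (RatFunc F) C = k) :
    -- (1) the family of basic generator matrices of C is invariant under GL(k, F_q[z])
    (∀ G : Fin k → Fin n → Polynomial F,
      LinearIndependent (Polynomial F) G →
      Submodule.span (RatFunc F) (Set.range fun i => liftVec (G i)) = C →
      Module.Free (Polynomial F)
        ((Fin n → Polynomial F) ⧸ Submodule.span (Polynomial F) (Set.range G)) →
      ∀ B : Matrix (Fin k) (Fin k) (Polynomial F), IsUnit B.det →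
        LinearIndependent (Polynomial F) (fun i => (B * Matrix.of G) i) ∧
        Submodule.span (RatFunc F) (Set.range fun i => liftVec ((B * Matrix.of G) i)) = C ∧
        Module.Free (Polynomial F)
          ((Fin n → Polynomial F) ⧸
            Submodule.span (Polynomial F) (Set.range fun i => (B * Matrix.of G) i))) ∧
    -- (2) δ_G is the same for all basic generator matrices of C
    (∀ G G' : Fin k → Fin n → Polynomial F,
      LinearIndependent (Polynomial F) G →
      Submodule.span (RatFunc F) (Set.range fun i => liftVec (G i)) = C →
      Module.Free (Polynomial F)
        ((Fin n → Polynomial F) ⧸ Submodule.span (Polynomial F) (Set.range G)) →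
      LinearIndependent (Polynomial F) G' →
      Submodule.span (RatFunc F) (Set.range fun i => liftVec (G' i)) = C →
      Module.Free (Polynomial F)
        ((Fin n → Polynomial F) ⧸ Submodule.span (Polynomial F) (Set.range G')) →
      maxMinorDeg G = maxMinorDeg G') := by
  constructor
  · intro G hli hspan hfree B hB
    refine ⟨li_mul hli B hB, ?_, ?_⟩
    · rw [show (Set.range fun i => liftVec ((B * Matrix.of G) i)) =
          liftL F n '' Set.range (fun i => (B * Matrix.of G) i) from range_liftVec _,
        ← span_lift_span, rowspan_mul_eq B hB G, span_lift_span,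
        ← range_liftVec, hspan]
    · rw [rowspan_mul_eq B hB G]
      exact hfree
  · intro G G' hli hspan hfree hli' hspan' hfree'
    -- the row modules coincide
    have hM : Submodule.span (Polynomial F) (Set.range G) =
        Submodule.span (Polynomial F) (Set.range G') :=
      le_antisymm (rowModule_le G G' hspan hspan' hfree')
        (rowModule_le G' G hspan' hspan hfree)
    -- change of basis matrices
    have hmem : ∀ i, G' i ∈ Submodule.span (Polynomial F) (Set.range G) := by
      intro i; rw [hM]; exact Submodule.subset_span (Set.mem_range_self i)
    have hmem' : ∀ i, G i ∈ Submodule.span (Polynomial F) (Set.range G') := by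
      intro i; rw [← hM]; exact Submodule.subset_span (Set.mem_range_self i)
    choose B hBrow using fun i => (Submodule.mem_span_range_iff_exists_fun (Polynomial F)).mp (hmem i)
    choose B' hB'row using fun i => (Submodule.mem_span_range_iff_exists_fun (Polynomial F)).mp (hmem' i)
    set Bm : Matrix (Fin k) (Fin k) (Polynomial F) := Matrix.of B with hBm
    set B'm : Matrix (Fin k) (Fin k) (Polynomial F) := Matrix.of B' with hB'm
    have hrowsG' : ∀ i, (Bm * Matrix.of G) i = G' i := by
      intro i; rw [row_smul]; exact hBrow i
    have hrowsG : ∀ i, (B'm * Matrix.of G') i = G i := by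
      intro i; rw [row_smul]; exact hB'row i
    have hmatG' : Bm * Matrix.of G = Matrix.of G' := by
      funext i; exact hrowsG' i
    have hmatG : B'm * Matrix.of G' = Matrix.of G := by
      funext i; exact hrowsG i
    -- Bm * B'm = 1
    have hone : Bm * B'm = 1 := by
      have hprod : (Bm * B'm) * Matrix.of G' = Matrix.of G' := by
        rw [Matrix.mul_assoc, hmatG, hmatG']
      rw [Fintype.linearIndependent_iff] at hli'
      funext i j
      have hzero : ∑ l, ((Bm * B'm) i l - (1 : Matrix (Fin k) (Fin k) (Polynomial F)) i l) • G' l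
          = 0 := by
        have h1 : ∑ l, (Bm * B'm) i l • G' l = G' i := by
          rw [← row_smul (Bm * B'm) G' i, hprod]; rfl
        have h2 : ∑ l, (1 : Matrix (Fin k) (Fin k) (Polynomial F)) i l • G' l = G' i := by
          rw [← row_smul 1 G' i, Matrix.one_mul]; rfl
        simp only [sub_smul, Finset.sum_sub_distrib, h1, h2, sub_self]
      have := hli' _ hzero j
      exact sub_eq_zero.mp this
    have hBdet : IsUnit Bm.det := by
      apply IsUnit.of_mul_eq_one B'm.det
      rw [← Matrix.det_mul, hone, Matrix.det_one]
    have hG'eq : G' = fun i => (Bm * Matrix.of G) i := by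
      funext i; exact (hrowsG' i).symm
    rw [hG'eq, maxMinorDeg_mul Bm hBdet G]
end

section
/- Let F_q be a finite field and let C ⊆ F_q(z)^n be a convolutional code of dimension k and degree δ. Then there exists a basic generator matrix G of C such that deg G = δ, where deg G denotes the sum of the row degrees of G (the degree of a row being the maximum of the degrees of its entries); moreover, this G satisfies deg G ≤ deg G' for every polynomial generator matrix G' of C. -/
set_option maxHeartbeats 800000
set_option synthInstance.maxHeartbeats 400000

open Polynomial Finset

/-- `deg G`: the sum of the row degrees of a polynomial matrix, the degree of a row
being the maximum of the degrees of its entries. -/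
noncomputable def rowDegSum {F : Type*} [Field F] {k n : ℕ}
    (G : Fin k → Fin n → Polynomial F) : ℕ :=
  ∑ i, Finset.univ.sup fun j => (G i j).natDegree

section Aux

open Matrix

variable {F : Type*} [Field F]


variable {F : Type*} [Field F]

lemma exists_minor_ne_zero {k n : ℕ} (v : Fin k → Fin n → F)
    (hv : LinearIndependent F v) :
    ∃ g : Fin k → Fin n, (Matrix.of fun i j => v i (g j)).det ≠ 0 := by
  classical
  set M : Matrix (Fin k) (Fin n) F := Matrix.of v with hM
  have hrank : M.rank = k := by
    have := hv.rank_matrix (M := M)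
    simpa using this
  have hfr : Module.finrank F (Submodule.span F (Set.range Mᵀ)) = k := by
    rw [show Set.range Mᵀ = Set.range M.col from rfl, ← Matrix.rank_eq_finrank_span_cols, hrank]
  have htop : Submodule.span F (Set.range Mᵀ) = ⊤ := by
    apply Submodule.eq_top_of_finrank_eq
    rw [hfr, Module.finrank_pi]
    simp
  obtain ⟨b, hbsub, hbspan, hbind⟩ := exists_linearIndependent F (Set.range Mᵀ)
  rw [htop] at hbspan
  let B : Module.Basis b F (Fin k → F) := Module.Basis.mk hbind (by rw [Subtype.range_coe, hbspan])
  let e : b ≃ Fin k := B.indexEquiv (Pi.basisFun F (Fin k))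
  have hchoice : ∀ i : Fin k, ∃ j : Fin n, Mᵀ j = ((e.symm i : b) : Fin k → F) :=
    fun i => hbsub (e.symm i).2
  choose g hg using hchoice
  refine ⟨g, ?_⟩
  have hcols : LinearIndependent F fun j => (Matrix.of fun i j' => v i (g j'))ᵀ j := by
    have heq : (fun j => (Matrix.of fun i j' => v i (g j'))ᵀ j)
        = fun j => ((e.symm j : b) : Fin k → F) := by
      funext j
      ext i
      exact congrFun (hg j) i
    rw [heq]
    exact hbind.comp e.symm e.symm.injective
  have := Matrix.linearIndependent_cols_iff_isUnit.mp hcols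
  exact ((Matrix.isUnit_iff_isUnit_det _).mp this).ne_zero

lemma coeff_prod_sum {ι : Type*} (s : Finset ι) (f : ι → Polynomial F) (d : ι → ℕ)
    (h : ∀ i ∈ s, (f i).natDegree ≤ d i) :
    (∏ i ∈ s, f i).coeff (∑ i ∈ s, d i) = ∏ i ∈ s, (f i).coeff (d i) := by
  classical
  induction s using Finset.induction_on with
  | empty => simp
  | @insert a s ha ih =>
    rw [Finset.prod_insert ha, Finset.sum_insert ha,
      coeff_mul_add_eq_of_natDegree_le (h a (Finset.mem_insert_self a s))
        ((natDegree_prod_le s f).trans (Finset.sum_le_sum fun i hi =>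
          h i (Finset.mem_insert_of_mem hi))),
      ih fun i hi => h i (Finset.mem_insert_of_mem hi), Finset.prod_insert ha]

lemma natDegree_det_le {k : ℕ} (M : Matrix (Fin k) (Fin k) (Polynomial F)) (d : Fin k → ℕ)
    (h : ∀ i j, (M i j).natDegree ≤ d i) : M.det.natDegree ≤ ∑ i, d i := by
  classical
  rw [Matrix.det_apply]
  refine natDegree_sum_le_of_forall_le _ _ fun σ _ => ?_
  rw [Units.smul_def, zsmul_eq_mul]
  refine (natDegree_mul_le).trans ?_
  rw [natDegree_intCast, zero_add]
  refine (natDegree_prod_le _ _).trans ?_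
  calc ∑ i, (M (σ i) i).natDegree ≤ ∑ i, d (σ i) := Finset.sum_le_sum fun i _ => h (σ i) i
    _ = ∑ i, d i := Equiv.sum_comp σ d

lemma coeff_det_sum {k : ℕ} (M : Matrix (Fin k) (Fin k) (Polynomial F)) (d : Fin k → ℕ)
    (h : ∀ i j, (M i j).natDegree ≤ d i) :
    M.det.coeff (∑ i, d i) = (Matrix.of fun i j => (M i j).coeff (d i)).det := by
  classical
  rw [Matrix.det_apply, Matrix.det_apply, finset_sum_coeff]
  refine Finset.sum_congr rfl fun σ _ => ?_
  rw [Units.smul_def, Units.smul_def, zsmul_eq_mul, coeff_intCast_mul, ← zsmul_eq_mul]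
  congr 1
  have hsum : (∑ i, d i) = ∑ i, d (σ i) := (Equiv.sum_comp σ d).symm
  rw [hsum, coeff_prod_sum _ _ _ fun i _ => h (σ i) i]
  rfl

variable {k n : ℕ}

lemma liftVec_sum_smul (s : Finset (Fin k)) (c : Fin k → Polynomial F)
    (v : Fin k → Fin n → Polynomial F) :
    liftVec (∑ l ∈ s, c l • v l)
      = ∑ l ∈ s, algebraMap (Polynomial F) (RatFunc F) (c l) • liftVec (v l) := by
  funext i
  simp only [liftVec, Finset.sum_apply, Pi.smul_apply, smul_eq_mul, map_sum, _root_.map_mul]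

lemma maxMinorDeg_le_rowDegSum (G : Fin k → Fin n → Polynomial F) :
    maxMinorDeg G ≤ rowDegSum G := by
  refine Finset.sup_le fun g _ => ?_
  refine natDegree_det_le _ _ fun i j => ?_
  exact Finset.le_sup (f := fun j' => (G i j').natDegree) (Finset.mem_univ (g j))

lemma span_lift_le {A B : Fin k → Fin n → Polynomial F}
    (h : Submodule.span (Polynomial F) (Set.range A) ≤
      Submodule.span (Polynomial F) (Set.range B)) :
    Submodule.span (RatFunc F) (Set.range fun i => liftVec (A i)) ≤
      Submodule.span (RatFunc F) (Set.range fun i => liftVec (B i)) := by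
  rw [Submodule.span_le]
  rintro _ ⟨i, rfl⟩
  have hAi : A i ∈ Submodule.span (Polynomial F) (Set.range B) :=
    h (Submodule.subset_span ⟨i, rfl⟩)
  rw [Submodule.mem_span_range_iff_exists_fun] at hAi
  obtain ⟨c, hc⟩ := hAi
  show liftVec (A i) ∈ _
  rw [← hc, liftVec_sum_smul]
  exact Submodule.sum_mem _ fun l _ =>
    Submodule.smul_mem _ _ (Submodule.subset_span ⟨l, rfl⟩)

section RowOp

variable (G : Fin k → Fin n → Polynomial F) (i : Fin k) (w : Fin k → Polynomial F)

/-- Replace row `i` by the linear combination `∑ w l • G l`. -/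
noncomputable def rowOp : Fin k → Fin n → Polynomial F :=
  Function.update G i (∑ l, w l • G l)

lemma rowOp_apply_ne {m : Fin k} (hm : m ≠ i) : rowOp G i w m = G m :=
  Function.update_of_ne hm _ _

lemma rowOp_apply_self : rowOp G i w i = ∑ l, w l • G l :=
  Function.update_self _ _ _

lemma rowOp_minor (hwi : w i = 1) (g : Fin k → Fin n) :
    ((Matrix.of (rowOp G i w)).submatrix id g).det
      = ((Matrix.of G).submatrix id g).det := by
  classical
  set N : Matrix (Fin k) (Fin k) (Polynomial F) := (Matrix.of G).submatrix id g with hN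
  have hsub : (Matrix.of (rowOp G i w)).submatrix id g
      = N.updateRow i (∑ l, w l • N l) := by
    ext m j
    by_cases hm : m = i
    · subst hm
      rw [Matrix.updateRow_self]
      simp only [Matrix.submatrix_apply, Matrix.of_apply, id_eq, rowOp_apply_self,
        Finset.sum_apply, Pi.smul_apply]
      rfl
    · rw [Matrix.updateRow_ne hm]
      simp only [Matrix.submatrix_apply, Matrix.of_apply, id_eq, rowOp_apply_ne G i w hm]
      rfl
  rw [hsub, Matrix.det_updateRow_sum, hwi, one_smul]

lemma rowOp_maxMinorDeg (hwi : w i = 1) : maxMinorDeg (rowOp G i w) = maxMinorDeg G := by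
  unfold maxMinorDeg
  refine Finset.sup_congr rfl fun g _ => ?_
  rw [rowOp_minor G i w hwi g]

lemma rowOp_span (hwi : w i = 1) :
    Submodule.span (Polynomial F) (Set.range (rowOp G i w))
      = Submodule.span (Polynomial F) (Set.range G) := by
  classical
  apply le_antisymm
  · rw [Submodule.span_le]
    rintro _ ⟨m, rfl⟩
    by_cases hm : m = i
    · subst hm
      rw [rowOp_apply_self]
      exact Submodule.sum_mem _ fun l _ =>
        Submodule.smul_mem _ _ (Submodule.subset_span ⟨l, rfl⟩)
    · rw [rowOp_apply_ne G i w hm]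
      exact Submodule.subset_span ⟨m, rfl⟩
  · rw [Submodule.span_le]
    rintro _ ⟨m, rfl⟩
    by_cases hm : m = i
    · subst hm
      have : G m = rowOp G m w m - ∑ l ∈ Finset.univ.erase m, w l • rowOp G m w l := by
        rw [rowOp_apply_self]
        rw [← Finset.add_sum_erase _ _ (Finset.mem_univ m), hwi, one_smul]
        have hrest : ∑ l ∈ Finset.univ.erase m, w l • G l
            = ∑ l ∈ Finset.univ.erase m, w l • rowOp G m w l := by
          refine Finset.sum_congr rfl fun l hl => ?_
          rw [rowOp_apply_ne G m w (Finset.ne_of_mem_erase hl)]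
        rw [hrest]
        abel
      rw [this]
      refine Submodule.sub_mem _ (Submodule.subset_span ⟨m, rfl⟩) ?_
      exact Submodule.sum_mem _ fun l _ =>
        Submodule.smul_mem _ _ (Submodule.subset_span ⟨l, rfl⟩)
    · have : G m = rowOp G i w m := (rowOp_apply_ne G i w hm).symm
      rw [this]
      exact Submodule.subset_span ⟨m, rfl⟩

lemma rowOp_linearIndependent (hwi : w i = 1)
    (h : LinearIndependent (Polynomial F) G) :
    LinearIndependent (Polynomial F) (rowOp G i w) := by
  classical
  rw [Fintype.linearIndependent_iff] at h ⊢
  intro a ha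
  have key : ∑ l, ((if l = i then 0 else a l) + a i * w l) • G l = 0 := by
    have expand : ∑ m, a m • rowOp G i w m
        = ∑ m, ((if m = i then 0 else a m) + a i * w m) • G m := by
      rw [← Finset.add_sum_erase _ (fun m => a m • rowOp G i w m) (Finset.mem_univ i),
        ← Finset.add_sum_erase _ (fun m => ((if m = i then 0 else a m) + a i * w m) • G m)
          (Finset.mem_univ i)]
      rw [rowOp_apply_self, if_pos rfl, zero_add, Finset.smul_sum]
      have h1 : ∑ l ∈ Finset.univ.erase i, a l • rowOp G i w l
          = ∑ l ∈ Finset.univ.erase i, a l • G l := by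
        refine Finset.sum_congr rfl fun l hl => ?_
        rw [rowOp_apply_ne G i w (Finset.ne_of_mem_erase hl)]
      rw [h1]
      have h2 : ∑ l ∈ Finset.univ.erase i, ((if l = i then 0 else a l) + a i * w l) • G l
          = ∑ l ∈ Finset.univ.erase i, (a l • G l + (a i * w l) • G l) := by
        refine Finset.sum_congr rfl fun l hl => ?_
        rw [if_neg (Finset.ne_of_mem_erase hl), add_smul]
      rw [h2, Finset.sum_add_distrib]
      have h3 : ∑ l, a i • w l • G l
          = (a i * w i) • G i + ∑ l ∈ Finset.univ.erase i, (a i * w l) • G l := by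
        rw [← Finset.add_sum_erase _ (fun l => a i • w l • G l) (Finset.mem_univ i)]
        simp only [smul_smul]
      rw [h3, hwi, mul_one]
      abel
    rw [← expand, ha]
  have hz := fun m => h _ key m
  intro m
  have hai : a i = 0 := by
    have := hz i
    rwa [if_pos rfl, zero_add, hwi, mul_one] at this
  by_cases hm : m = i
  · rw [hm]; exact hai
  · have := hz m
    rw [if_neg hm, hai, zero_mul, add_zero] at this
    exact this

end RowOp

lemma exists_rowOp_decreasing (G : Fin k → Fin n → Polynomial F)
    (hind : LinearIndependent (Polynomial F) G)
    (hlt : maxMinorDeg G < rowDegSum G) :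
    ∃ G' : Fin k → Fin n → Polynomial F,
      LinearIndependent (Polynomial F) G' ∧
      Submodule.span (Polynomial F) (Set.range G')
        = Submodule.span (Polynomial F) (Set.range G) ∧
      maxMinorDeg G' = maxMinorDeg G ∧
      rowDegSum G' < rowDegSum G := by
  classical
  set ν : Fin k → ℕ := fun i => Finset.univ.sup fun j => (G i j).natDegree with hν
  set Gb : Fin k → Fin n → F := fun i j => (G i j).coeff (ν i) with hGb
  have hrds : rowDegSum G = ∑ i, ν i := rfl
  have hentry : ∀ (g : Fin k → Fin n) (i : Fin k) (j : Fin k),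
      (((Matrix.of G).submatrix id g) i j).natDegree ≤ ν i := fun g i j =>
    Finset.le_sup (f := fun j' => (G i j').natDegree) (Finset.mem_univ (g j))
  -- Step 1: the rows of the leading-coefficient matrix are linearly dependent
  have hdep : ¬ LinearIndependent F Gb := by
    intro hLI
    obtain ⟨g, hg⟩ := exists_minor_ne_zero Gb hLI
    have hcoeff : (((Matrix.of G).submatrix id g).det).coeff (∑ i, ν i)
        = (Matrix.of fun i j => Gb i (g j)).det := by
      rw [coeff_det_sum ((Matrix.of G).submatrix id g) ν (hentry g)]
      rfl
    have hne : (((Matrix.of G).submatrix id g).det).coeff (∑ i, ν i) ≠ 0 := by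
      rw [hcoeff]; exact hg
    have hge : (∑ i, ν i) ≤ (((Matrix.of G).submatrix id g).det).natDegree :=
      le_natDegree_of_ne_zero hne
    have hsup : (((Matrix.of G).submatrix id g).det).natDegree ≤ maxMinorDeg G :=
      Finset.le_sup (f := fun g' : Fin k → Fin n =>
        (((Matrix.of G).submatrix id g').det).natDegree) (Finset.mem_univ g)
    omega
  rw [Fintype.not_linearIndependent_iff] at hdep
  obtain ⟨c, hcsum, l0, hl0⟩ := hdep
  -- Step 2: pick i in the support of c with maximal ν
  set s : Finset (Fin k) := Finset.univ.filter (fun l => c l ≠ 0) with hs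
  have hsne : s.Nonempty := ⟨l0, by simp [hs, hl0]⟩
  obtain ⟨i, his, hisup⟩ := Finset.exists_mem_eq_sup s hsne ν
  have hci : c i ≠ 0 := by
    have := his; rw [hs, Finset.mem_filter] at this; exact this.2
  have hmax : ∀ l, c l ≠ 0 → ν l ≤ ν i := fun l hl => by
    rw [← hisup]
    exact Finset.le_sup (by rw [hs, Finset.mem_filter]; exact ⟨Finset.mem_univ l, hl⟩)
  have hGbsum : ∀ j, ∑ l, c l * Gb l j = 0 := fun j => by
    have := congrFun hcsum j
    simpa [Finset.sum_apply] using this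
  -- Step 3: ν i ≥ 1
  have hν1 : 1 ≤ ν i := by
    by_contra hcon
    push_neg at hcon
    have hν0 : ν i = 0 := by omega
    have key : ∑ l, (Polynomial.C (c l)) • G l = 0 := by
      funext j
      have hterm : ∀ l, Polynomial.C (c l) * G l j = Polynomial.C (c l * Gb l j) := by
        intro l
        by_cases hl : c l = 0
        · simp [hl]
        · have hνl : ν l = 0 := by have := hmax l hl; omega
          have hdeg : (G l j).natDegree ≤ 0 := by
            have : (G l j).natDegree ≤ ν l :=
              Finset.le_sup (f := fun j' => (G l j').natDegree) (Finset.mem_univ j)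
            omega
          have hc : G l j = Polynomial.C ((G l j).coeff 0) :=
            (Polynomial.eq_C_of_natDegree_le_zero hdeg)
          have hgb : Gb l j = (G l j).coeff 0 := by rw [hGb]; simp [hνl]
          rw [hc, hgb, ← Polynomial.C_mul]
      have : (∑ l, (Polynomial.C (c l)) • G l) j = ∑ l, Polynomial.C (c l) * G l j := by
        simp [Finset.sum_apply]
      rw [this]
      simp only [hterm]
      rw [← map_sum, hGbsum j, map_zero]
      rfl
    rw [Fintype.linearIndependent_iff] at hind
    exact hci (by simpa using hind _ key i)
  -- Step 4: the row operation
  set w : Fin k → Polynomial F :=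
    fun l => Polynomial.C (c l * (c i)⁻¹) * Polynomial.X ^ (ν i - ν l) with hw
  have hwi : w i = 1 := by
    rw [hw]
    simp [mul_inv_cancel₀ hci]
  refine ⟨rowOp G i w, rowOp_linearIndependent G i w hwi hind,
    rowOp_span G i w hwi, rowOp_maxMinorDeg G i w hwi, ?_⟩
  -- Step 5: the row degree sum decreases
  have hq : ∀ j, (rowOp G i w i j) = ∑ l, w l * G l j := by
    intro j
    rw [rowOp_apply_self]
    simp [Finset.sum_apply]
  have h1 : ∀ j l, (w l * G l j).natDegree ≤ ν i := by
    intro j l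
    by_cases hl : c l = 0
    · have : w l = 0 := by rw [hw]; simp [hl]
      simp [this]
    · refine (Polynomial.natDegree_mul_le).trans ?_
      have hwdeg : (w l).natDegree ≤ ν i - ν l := by
        rw [hw]
        exact Polynomial.natDegree_C_mul_X_pow_le _ _
      have hGdeg : (G l j).natDegree ≤ ν l :=
        Finset.le_sup (f := fun j' => (G l j').natDegree) (Finset.mem_univ j)
      have := hmax l hl
      omega
  have h2 : ∀ j, (rowOp G i w i j).coeff (ν i) = 0 := by
    intro j
    rw [hq j, Polynomial.finset_sum_coeff]
    have hterm : ∀ l, (w l * G l j).coeff (ν i) = (c l * (c i)⁻¹) * Gb l j := by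
      intro l
      by_cases hl : c l = 0
      · have : w l = 0 := by rw [hw]; simp [hl]
        simp [this, hl]
      · have hale : ν l ≤ ν i := hmax l hl
        obtain ⟨a, ha⟩ : ∃ a, ν i = ν l + a := ⟨ν i - ν l, by omega⟩
        have ha2 : ν i - ν l = a := by omega
        rw [hw, mul_assoc, Polynomial.coeff_C_mul, ha2, ha, Polynomial.coeff_X_pow_mul]
    rw [Finset.sum_congr rfl fun l _ => hterm l]
    have : ∑ l, c l * (c i)⁻¹ * Gb l j = (c i)⁻¹ * ∑ l, c l * Gb l j := by
      rw [Finset.mul_sum]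
      exact Finset.sum_congr rfl fun l _ => by ring
    rw [this, hGbsum j, mul_zero]
  have h3 : ∀ j, (rowOp G i w i j).natDegree < ν i := by
    intro j
    by_cases hz : rowOp G i w i j = 0
    · rw [hz]; (simp; omega)
    · have hle : (rowOp G i w i j).natDegree ≤ ν i := by
        rw [hq j]
        exact Polynomial.natDegree_sum_le_of_forall_le _ _ fun l _ => h1 j l
      rcases lt_or_eq_of_le hle with h | h
      · exact h
      · exfalso
        have := Polynomial.leadingCoeff_ne_zero.mpr hz
        rw [Polynomial.leadingCoeff, h] at this
        exact this (h2 j)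
  have hrow : (Finset.univ.sup fun j => (rowOp G i w i j).natDegree) < ν i := by
    rcases Finset.eq_empty_or_nonempty (Finset.univ : Finset (Fin n)) with he | hne
    · rw [he]; (simp; omega)
    · rw [Finset.sup_lt_iff (by (simp; omega))]
      exact fun j _ => h3 j
  unfold rowDegSum
  refine Finset.sum_lt_sum (fun m _ => ?_) ⟨i, Finset.mem_univ i, ?_⟩
  · by_cases hm : m = i
    · subst hm
      exact le_of_lt hrow
    · rw [rowOp_apply_ne G i w hm]
  · exact hrow

lemma reduce :
    ∀ (N : ℕ) (G : Fin k → Fin n → Polynomial F), rowDegSum G ≤ N →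
      LinearIndependent (Polynomial F) G →
      ∃ G' : Fin k → Fin n → Polynomial F,
        LinearIndependent (Polynomial F) G' ∧
        Submodule.span (Polynomial F) (Set.range G')
          = Submodule.span (Polynomial F) (Set.range G) ∧
        maxMinorDeg G' = maxMinorDeg G ∧
        rowDegSum G' = maxMinorDeg G' := by
  intro N
  induction N with
  | zero =>
    intro G h0 hind
    refine ⟨G, hind, rfl, rfl, ?_⟩
    have := maxMinorDeg_le_rowDegSum G
    omega
  | succ N ih =>
    intro G hle hind
    by_cases h : rowDegSum G = maxMinorDeg G
    · exact ⟨G, hind, rfl, rfl, h⟩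
    · have hlt : maxMinorDeg G < rowDegSum G :=
        lt_of_le_of_ne (maxMinorDeg_le_rowDegSum G) (Ne.symm h)
      obtain ⟨G', h1, h2, h3, h4⟩ := exists_rowOp_decreasing G hind hlt
      obtain ⟨G'', k1, k2, k3, k4⟩ := ih G' (by omega) h1
      exact ⟨G'', k1, k2.trans h2, k3.trans h3, k4⟩

lemma row_mem_span (G G'' : Fin k → Fin n → Polynomial F)
    (hfree : Module.Free (Polynomial F)
      ((Fin n → Polynomial F) ⧸ Submodule.span (Polynomial F) (Set.range G)))
    (i : Fin k)
    (hmem : liftVec (G'' i) ∈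
      Submodule.span (RatFunc F) (Set.range fun l => liftVec (G l))) :
    G'' i ∈ Submodule.span (Polynomial F) (Set.range G) := by
  classical
  rw [Submodule.mem_span_range_iff_exists_fun] at hmem
  obtain ⟨c, hc⟩ := hmem
  obtain ⟨b, hb⟩ := IsLocalization.exist_integer_multiples_of_finite
    (nonZeroDivisors (Polynomial F)) c
  choose p hp using hb
  have hkey : (b : Polynomial F) • G'' i = ∑ l, p l • G l := by
    have hinj : Function.Injective (algebraMap (Polynomial F) (RatFunc F)) :=
      IsFractionRing.injective (Polynomial F) (RatFunc F)
    funext j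
    apply hinj
    have hcj := congrFun hc j
    simp only [Finset.sum_apply, Pi.smul_apply, liftVec, smul_eq_mul] at hcj
    have lhs : algebraMap (Polynomial F) (RatFunc F) (((b : Polynomial F) • G'' i) j)
        = algebraMap (Polynomial F) (RatFunc F) (b : Polynomial F)
          * algebraMap (Polynomial F) (RatFunc F) (G'' i j) := by
      simp [Pi.smul_apply, smul_eq_mul, _root_.map_mul]
    rw [lhs, ← hcj, Finset.mul_sum]
    have rhs : algebraMap (Polynomial F) (RatFunc F) ((∑ l, p l • G l) j)
        = ∑ l, algebraMap (Polynomial F) (RatFunc F) (p l)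
          * algebraMap (Polynomial F) (RatFunc F) (G l j) := by
      simp [Finset.sum_apply, Pi.smul_apply, smul_eq_mul, _root_.map_mul, map_sum]
    rw [rhs]
    refine Finset.sum_congr rfl fun l _ => ?_
    have := hp l
    rw [Algebra.smul_def] at this
    rw [this]
    ring
  have hmemM : (b : Polynomial F) • G'' i ∈ Submodule.span (Polynomial F) (Set.range G) := by
    rw [hkey]
    exact Submodule.sum_mem _ fun l _ =>
      Submodule.smul_mem _ _ (Submodule.subset_span ⟨l, rfl⟩)
  haveI := hfree
  have hq : (b : Polynomial F) • (Submodule.Quotient.mk (G'' i) :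
      (Fin n → Polynomial F) ⧸ Submodule.span (Polynomial F) (Set.range G)) = 0 := by
    rw [← Submodule.Quotient.mk_smul, Submodule.Quotient.mk_eq_zero]
    exact hmemM
  rcases smul_eq_zero.mp hq with hb0 | hmk
  · exact absurd hb0 (nonZeroDivisors.coe_ne_zero b)
  · rwa [Submodule.Quotient.mk_eq_zero] at hmk

lemma le_rowDegSum_of_rows_mem (G G'' : Fin k → Fin n → Polynomial F)
    (hind'' : LinearIndependent (Polynomial F) G'')
    (hrows : ∀ i, G'' i ∈ Submodule.span (Polynomial F) (Set.range G)) :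
    maxMinorDeg G ≤ rowDegSum G'' := by
  classical
  have hT : ∀ i, ∃ t : Fin k → Polynomial F, ∑ l, t l • G l = G'' i := fun i => by
    have := hrows i
    rwa [Submodule.mem_span_range_iff_exists_fun] at this
  choose T hTspec using hT
  have hdetT : (Matrix.of T).det ≠ 0 := by
    intro hdet
    obtain ⟨v, hv, hvT⟩ := (Matrix.exists_vecMul_eq_zero_iff).mpr hdet
    have hzero : ∑ m, v m • G'' m = 0 := by
      have step1 : ∀ m, v m • G'' m = ∑ l, (v m * T m l) • G l := by
        intro m
        rw [← hTspec m, Finset.smul_sum]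
        exact Finset.sum_congr rfl fun l _ => by rw [smul_smul]
      calc ∑ m, v m • G'' m = ∑ m, ∑ l, (v m * T m l) • G l :=
            Finset.sum_congr rfl fun m _ => step1 m
        _ = ∑ l, (∑ m, v m * T m l) • G l := by
            rw [Finset.sum_comm]
            exact Finset.sum_congr rfl fun l _ => (Finset.sum_smul).symm
        _ = 0 := by
            refine Finset.sum_eq_zero fun l _ => ?_
            have : ∑ m, v m * T m l = 0 := congrFun hvT l
            rw [this, zero_smul]
    rw [Fintype.linearIndependent_iff] at hind''
    exact hv (funext fun m => hind'' v hzero m)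
  rcases Nat.eq_zero_or_pos (maxMinorDeg G) with h0 | hpos
  · rw [h0]; exact Nat.zero_le _
  cases isEmpty_or_nonempty (Fin k → Fin n) with
  | inl he =>
    exfalso
    have : maxMinorDeg G = 0 := by
      unfold maxMinorDeg
      rw [Finset.univ_eq_empty, Finset.sup_empty]
      rfl
    omega
  | inr hne =>
    obtain ⟨g, _, hgeq⟩ := Finset.exists_mem_eq_sup (Finset.univ : Finset (Fin k → Fin n))
      Finset.univ_nonempty fun g : Fin k → Fin n =>
        (((Matrix.of G).submatrix id g).det).natDegree
    have hgdeg : (((Matrix.of G).submatrix id g).det).natDegree = maxMinorDeg G := hgeq.symm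
    have hminor : ((Matrix.of G).submatrix id g).det ≠ 0 := by
      intro h
      rw [h, Polynomial.natDegree_zero] at hgdeg
      omega
    have hmat : (Matrix.of G'').submatrix id g
        = (Matrix.of T) * ((Matrix.of G).submatrix id g) := by
      refine Matrix.ext fun m j => ?_
      rw [Matrix.mul_apply]
      simp only [Matrix.submatrix_apply, Matrix.of_apply, id_eq]
      have := congrFun (hTspec m) (g j)
      simp only [Finset.sum_apply, Pi.smul_apply, smul_eq_mul] at this
      exact this.symm
    have hdeg : maxMinorDeg G ≤ (((Matrix.of G'').submatrix id g).det).natDegree := by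
      rw [hmat, Matrix.det_mul, Polynomial.natDegree_mul hdetT hminor, hgdeg]
      omega
    calc maxMinorDeg G ≤ (((Matrix.of G'').submatrix id g).det).natDegree := hdeg
      _ ≤ maxMinorDeg G'' :=
          Finset.le_sup (f := fun g' : Fin k → Fin n =>
            (((Matrix.of G'').submatrix id g').det).natDegree) (Finset.mem_univ g)
      _ ≤ rowDegSum G'' := maxMinorDeg_le_rowDegSum G''


end Aux

theorem exists_canonical_generator_matrix
    {F : Type*} [Field F] [Fintype F]
    (n k δ : ℕ)
    (C : Submodule (RatFunc F) (Fin n → RatFunc F))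
    (hC : Module.finrank (RatFunc F) C = k)
    -- C has degree δ: δ is the maximum minor degree of some (hence any) basic
    -- generator matrix G₀ of C
    (G₀ : Fin k → Fin n → Polynomial F)
    (hG₀rank : LinearIndependent (Polynomial F) G₀)
    (hG₀span : Submodule.span (RatFunc F) (Set.range fun i => liftVec (G₀ i)) = C)
    (hG₀basic : Module.Free (Polynomial F)
      ((Fin n → Polynomial F) ⧸ Submodule.span (Polynomial F) (Set.range G₀)))
    (hδ : maxMinorDeg G₀ = δ) :
    -- there is a basic generator matrix G of C with deg G = δ,
    -- minimal among all polynomial generator matrices of C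
    ∃ G : Fin k → Fin n → Polynomial F,
      LinearIndependent (Polynomial F) G ∧
      Submodule.span (RatFunc F) (Set.range fun i => liftVec (G i)) = C ∧
      Module.Free (Polynomial F)
        ((Fin n → Polynomial F) ⧸ Submodule.span (Polynomial F) (Set.range G)) ∧
      rowDegSum G = δ ∧
      ∀ G' : Fin k → Fin n → Polynomial F,
        LinearIndependent (Polynomial F) G' →
        Submodule.span (RatFunc F) (Set.range fun i => liftVec (G' i)) = C →
        rowDegSum G ≤ rowDegSum G' := by
  obtain ⟨G, hind, hspan, hmm, hred⟩ := reduce (rowDegSum G₀) G₀ le_rfl hG₀rank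
  have hliftspan : Submodule.span (RatFunc F) (Set.range fun i => liftVec (G i)) = C := by
    rw [← hG₀span]
    exact le_antisymm (span_lift_le hspan.le) (span_lift_le hspan.ge)
  have hfree : Module.Free (Polynomial F)
      ((Fin n → Polynomial F) ⧸ Submodule.span (Polynomial F) (Set.range G)) := by
    rw [hspan]; exact hG₀basic
  refine ⟨G, hind, hliftspan, hfree, by rw [hred, hmm, hδ], ?_⟩
  intro G'' hind'' hspan''
  have hrows : ∀ i, G'' i ∈ Submodule.span (Polynomial F) (Set.range G) := by
    intro i
    refine row_mem_span G G'' hfree i ?_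
    rw [hliftspan, ← hspan'']
    exact Submodule.subset_span ⟨i, rfl⟩
  calc rowDegSum G = maxMinorDeg G := hred
    _ ≤ rowDegSum G'' := le_rowDegSum_of_rows_mem G G'' hind'' hrows
end
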